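/- arXiv:2506.18058 — 7 statements merged into one kernel-verified Lean document; each statement's English description precedes it below -/
import Mathlib

section
/- Let m_x, m_y ≥ 1, Δx, Δy > 0, let M be the Dirichlet Kronecker-sum Laplacian of sizes (m_x, m_y) and steps (Δx, Δy), let α > 0, β > 0, and set P = β·I − α·M. Let N be any (m_x·m_y)×(m_x·m_y) real matrix with ‖N‖₁ ≤ 4·(1/Δx² + 1/Δy²) and ‖N‖_∞ ≤ 4·(1/Δx² + 1/Δy²). Then the spectral radius of Σ = −α·P⁻¹·N satisfies ρ(Σ) < (4α/β)·(1/Δx² + 1/Δy²). -/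
open Matrix Kronecker

noncomputable def dirLap (m : ℕ) (Δ : ℝ) : Matrix (Fin m) (Fin m) ℝ :=
  Matrix.of fun i j =>
    if i = j then -2 / Δ ^ 2
    else if (i : ℕ) + 1 = (j : ℕ) ∨ (j : ℕ) + 1 = (i : ℕ) then 1 / Δ ^ 2
    else 0

noncomputable def neuLap (m : ℕ) (Δ : ℝ) : Matrix (Fin m) (Fin m) ℝ :=
  Matrix.of fun i j =>
    if i = j then -2 / Δ ^ 2
    else if ((i : ℕ) = 0 ∧ (j : ℕ) = 1) ∨ ((i : ℕ) = m - 1 ∧ (j : ℕ) = m - 2) then 2 / Δ ^ 2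
    else if (i : ℕ) + 1 = (j : ℕ) ∨ (j : ℕ) + 1 = (i : ℕ) then 1 / Δ ^ 2
    else 0

noncomputable def kronLapD (mx my : ℕ) (Δx Δy : ℝ) :
    Matrix (Fin my × Fin mx) (Fin my × Fin mx) ℝ :=
  (1 : Matrix (Fin my) (Fin my) ℝ) ⊗ₖ dirLap mx Δx +
    dirLap my Δy ⊗ₖ (1 : Matrix (Fin mx) (Fin mx) ℝ)

noncomputable def kronLapN (mx my : ℕ) (Δx Δy : ℝ) :
    Matrix (Fin my × Fin mx) (Fin my × Fin mx) ℝ :=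
  (1 : Matrix (Fin my) (Fin my) ℝ) ⊗ₖ neuLap mx Δx +
    neuLap my Δy ⊗ₖ (1 : Matrix (Fin mx) (Fin mx) ℝ)

noncomputable def specRad {n : Type*} [Fintype n] [DecidableEq n] (A : Matrix n n ℝ) : ℝ :=
  sSup ((fun z : ℂ => ‖z‖) '' spectrum ℂ (A.map Complex.ofReal))

noncomputable def specRadC {n : Type*} [Fintype n] [DecidableEq n] (A : Matrix n n ℂ) : ℝ :=
  sSup ((fun z : ℂ => ‖z‖) '' spectrum ℂ A)

noncomputable def norm1 {n : Type*} [Fintype n] (A : Matrix n n ℝ) : ℝ :=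
  ⨆ j, ∑ i, |A i j|

noncomputable def normInf {n : Type*} [Fintype n] (A : Matrix n n ℝ) : ℝ :=
  ⨆ i, ∑ j, |A i j|

noncomputable def norm2 {n : Type*} [Fintype n] [DecidableEq n] (A : Matrix n n ℝ) : ℝ :=
  ‖Matrix.toEuclideanCLM (𝕜 := ℝ) A‖


namespace Stmt4Aux
open Complex
open Complex

noncomputable def dmat (m : ℕ) : Matrix (Fin (m+1)) (Fin m) ℂ :=
  Matrix.of fun i j =>
    (if (i : ℕ) = (j : ℕ) then 1 else 0) - (if (i : ℕ) = (j : ℕ) + 1 then 1 else 0)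

lemma sum_if₁ {m : ℕ} (c : ℕ) (f : Fin m → ℂ) :
    (∑ k : Fin m, if (k : ℕ) = c then f k else 0)
      = if h : c < m then f ⟨c, h⟩ else 0 := by
  split_ifs with h
  · rw [Finset.sum_eq_single ⟨c, h⟩]
    · simp
    · intro b _ hb
      rw [if_neg fun hbc => hb (Fin.ext hbc)]
    · simp
  · apply Finset.sum_eq_zero
    intro k _
    have hne : ¬ ((k:ℕ) = c) := fun hk => h (hk ▸ k.isLt)
    rw [if_neg hne]

lemma sum_if₂ {m : ℕ} (c : ℕ) (f : Fin m → ℂ) :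
    (∑ k : Fin m, if c = (k : ℕ) then f k else 0)
      = if h : c < m then f ⟨c, h⟩ else 0 := by
  rw [← sum_if₁ c f]
  exact Finset.sum_congr rfl fun k _ => if_congr eq_comm rfl rfl

lemma dtd_apply (m : ℕ) (i j : Fin m) :
    ((dmat m)ᴴ * (dmat m)) i j
      = (if (i:ℕ) = (j:ℕ) then 2 else 0) - (if (i:ℕ)+1 = (j:ℕ) then 1 else 0)
          - (if (j:ℕ)+1 = (i:ℕ) then 1 else 0) := by
  have key : ∀ a b : ℕ, a < m + 1 →
      (∑ k : Fin (m+1), (if (k:ℕ) = a then (1:ℂ) else 0) * (if (k:ℕ) = b then 1 else 0))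
        = if a = b then 1 else 0 := by
    intro a b ha
    have h2 : (∑ k : Fin (m+1), if (k:ℕ) = a then (if (k:ℕ) = b then (1:ℂ) else 0) else 0)
        = if h : a < m + 1 then (if ((⟨a, h⟩ : Fin (m+1)) : ℕ) = b then (1:ℂ) else 0) else 0 :=
      sum_if₁ a _
    rw [dif_pos ha] at h2
    rw [← h2]
    refine Finset.sum_congr rfl fun k _ => ?_
    split_ifs <;> simp
  rw [Matrix.mul_apply]
  have expand : ∀ k : Fin (m+1), (dmat m)ᴴ i k * (dmat m) k j
      = ((if (k:ℕ) = (i:ℕ) then (1:ℂ) else 0) * (if (k:ℕ) = (j:ℕ) then 1 else 0)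
        - (if (k:ℕ) = (i:ℕ) then (1:ℂ) else 0) * (if (k:ℕ) = (j:ℕ)+1 then 1 else 0))
        - ((if (k:ℕ) = (i:ℕ)+1 then (1:ℂ) else 0) * (if (k:ℕ) = (j:ℕ) then 1 else 0)
        - (if (k:ℕ) = (i:ℕ)+1 then (1:ℂ) else 0) * (if (k:ℕ) = (j:ℕ)+1 then 1 else 0)) := by
    intro k
    rw [Matrix.conjTranspose_apply]
    simp only [dmat, Matrix.of_apply, star_sub]
    have h1 : star (if (k:ℕ) = (i:ℕ) then (1:ℂ) else 0) = (if (k:ℕ) = (i:ℕ) then (1:ℂ) else 0) := by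
      split_ifs <;> simp
    have h2 : star (if (k:ℕ) = (i:ℕ)+1 then (1:ℂ) else 0)
        = (if (k:ℕ) = (i:ℕ)+1 then (1:ℂ) else 0) := by
      split_ifs <;> simp
    rw [h1, h2]; ring
  rw [Finset.sum_congr rfl fun k _ => expand k, Finset.sum_sub_distrib,
    Finset.sum_sub_distrib, Finset.sum_sub_distrib,
    key (i:ℕ) (j:ℕ) (by omega), key (i:ℕ) ((j:ℕ)+1) (by omega),
    key ((i:ℕ)+1) (j:ℕ) (by omega), key ((i:ℕ)+1) ((j:ℕ)+1) (by omega)]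
  split_ifs <;> first | (exfalso; omega) | norm_num

lemma dirLap_map (m : ℕ) (Δ : ℝ) (hΔ : Δ ≠ 0) :
    (dirLap m Δ).map Complex.ofReal
      = -((1/(Δ:ℂ)^2) • ((dmat m)ᴴ * (dmat m))) := by
  have hΔ' : (Δ:ℂ) ≠ 0 := ofReal_ne_zero.mpr hΔ
  ext i j
  simp only [Matrix.map_apply, Matrix.neg_apply, Matrix.smul_apply, dtd_apply, dirLap,
    Matrix.of_apply, smul_eq_mul, Fin.ext_iff]
  split_ifs <;> first | (exfalso; omega) | (push_cast; field_simp; ring) | (push_cast; field_simp) | push_cast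

lemma dmat_mulVec_eq_zero {m : ℕ} {w : Fin m → ℂ} (h : dmat m *ᵥ w = 0) : w = 0 := by
  have main : ∀ t (ht : t < m), w ⟨t, ht⟩ = 0 := by
    intro t
    induction t using Nat.strong_induction_on with
    | _ t IH =>
      intro ht
      have hrow := congrFun h ⟨t, by omega⟩
      simp only [mulVec, dotProduct, dmat, Matrix.of_apply, Pi.zero_apply] at hrow
      have expand : ∀ j : Fin m,
          ((if t = (j:ℕ) then (1:ℂ) else 0) - (if t = (j:ℕ)+1 then 1 else 0)) * w j
            = (if t = (j:ℕ) then w j else 0) - (if t = (j:ℕ)+1 then w j else 0) := by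
        intro j; split_ifs <;> ring
      rw [Finset.sum_congr rfl fun j _ => expand j, Finset.sum_sub_distrib, sum_if₂,
        dif_pos ht] at hrow
      match t, ht, hrow with
      | 0, ht, hrow =>
        have : (∑ j : Fin m, if 0 = (j:ℕ)+1 then w j else 0) = 0 :=
          Finset.sum_eq_zero fun j _ => if_neg (by omega)
        rw [this, sub_zero] at hrow
        exact hrow
      | (s+1), ht, hrow =>
        have hconv : (∑ j : Fin m, if s+1 = (j:ℕ)+1 then w j else 0)
            = ∑ j : Fin m, if s = (j:ℕ) then w j else 0 :=
          Finset.sum_congr rfl fun j _ => if_congr (by omega) rfl rfl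
        rw [hconv, sum_if₂, dif_pos (by omega : s < m), IH s (by omega) (by omega),
          sub_zero] at hrow
        exact hrow
  funext j
  have := main j.1 j.2
  simpa using this

lemma re_star_dot (k : Type*) [Fintype k] (u : k → ℂ) :
    (star u ⬝ᵥ u).re = ∑ i, normSq (u i) := by
  rw [dotProduct, Complex.re_sum]
  refine Finset.sum_congr rfl fun i _ => ?_
  simp only [Pi.star_apply, Complex.star_def]
  rw [mul_comm, Complex.mul_conj]
  simp

lemma dir_quad {m : ℕ} (Δ : ℝ) (hΔ : 0 < Δ) (w : Fin m → ℂ) :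
    (star w ⬝ᵥ ((dirLap m Δ).map Complex.ofReal) *ᵥ w).re ≤ 0
      ∧ (w ≠ 0 → (star w ⬝ᵥ ((dirLap m Δ).map Complex.ofReal) *ᵥ w).re < 0) := by
  rw [dirLap_map m Δ hΔ.ne']
  have h1 : star w ⬝ᵥ (-((1/(Δ:ℂ)^2) • ((dmat m)ᴴ * (dmat m)))) *ᵥ w
      = -((1/(Δ:ℂ)^2) * (star (dmat m *ᵥ w) ⬝ᵥ (dmat m *ᵥ w))) := by
    rw [Matrix.neg_mulVec, dotProduct_neg, Matrix.smul_mulVec,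
      dotProduct_smul, smul_eq_mul]
    congr 2
    rw [← Matrix.mulVec_mulVec, Matrix.dotProduct_mulVec, Matrix.vecMul_conjTranspose, star_star]
  rw [h1]
  have h2 : ((1/(Δ:ℂ)^2) * (star (dmat m *ᵥ w) ⬝ᵥ (dmat m *ᵥ w))).re
      = (1/Δ^2) * ∑ i, normSq ((dmat m *ᵥ w) i) := by
    have : (1/(Δ:ℂ)^2) = ((1/Δ^2 : ℝ) : ℂ) := by push_cast; ring
    rw [this, Complex.re_ofReal_mul, re_star_dot]
  rw [Complex.neg_re, h2]
  have hnn : 0 ≤ ∑ i, normSq ((dmat m *ᵥ w) i) :=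
    Finset.sum_nonneg fun i _ => normSq_nonneg _
  have hc : 0 < 1/Δ^2 := by positivity
  constructor
  · nlinarith
  · intro hw
    have : dmat m *ᵥ w ≠ 0 := fun hz => hw (dmat_mulVec_eq_zero hz)
    obtain ⟨i, hi⟩ := Function.ne_iff.mp this
    have hpos : 0 < ∑ i, normSq ((dmat m *ᵥ w) i) :=
      Finset.sum_pos' (fun i _ => normSq_nonneg _)
        ⟨i, Finset.mem_univ i, by simpa [Complex.normSq_pos] using hi⟩
    nlinarith



lemma quad_kron_left {mx my : ℕ} (A : Matrix (Fin mx) (Fin mx) ℝ)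
    (v : Fin my × Fin mx → ℂ) :
    star v ⬝ᵥ (((1 : Matrix (Fin my) (Fin my) ℝ) ⊗ₖ A).map Complex.ofReal) *ᵥ v
      = ∑ k : Fin my,
          star (fun i => v (k, i)) ⬝ᵥ (A.map Complex.ofReal) *ᵥ (fun i => v (k, i)) := by
  rw [dotProduct, Fintype.sum_prod_type]
  refine Finset.sum_congr rfl fun k _ => ?_
  rw [dotProduct]
  refine Finset.sum_congr rfl fun i _ => ?_
  simp only [Pi.star_apply]
  congr 1
  rw [mulVec, dotProduct, Fintype.sum_prod_type, mulVec, dotProduct]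
  have inner : ∀ l : Fin my, (∑ j : Fin mx,
      (((1 : Matrix (Fin my) (Fin my) ℝ) ⊗ₖ A).map Complex.ofReal) (k, i) (l, j) * v (l, j))
        = if k = l then (∑ j : Fin mx, (A.map Complex.ofReal) i j * v (l, j)) else 0 := by
    intro l
    split_ifs with h
    · refine Finset.sum_congr rfl fun j _ => ?_
      simp [Matrix.map_apply, kroneckerMap_apply, Matrix.one_apply, h]
    · refine Finset.sum_eq_zero fun j _ => ?_
      simp [Matrix.map_apply, kroneckerMap_apply, Matrix.one_apply, h]
  rw [Finset.sum_congr rfl fun l _ => inner l, Finset.sum_ite_eq Finset.univ k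
    (fun l => ∑ j : Fin mx, (A.map Complex.ofReal) i j * v (l, j)), if_pos (Finset.mem_univ k)]

lemma quad_kron_right {mx my : ℕ} (B : Matrix (Fin my) (Fin my) ℝ)
    (v : Fin my × Fin mx → ℂ) :
    star v ⬝ᵥ ((B ⊗ₖ (1 : Matrix (Fin mx) (Fin mx) ℝ)).map Complex.ofReal) *ᵥ v
      = ∑ i : Fin mx,
          star (fun k => v (k, i)) ⬝ᵥ (B.map Complex.ofReal) *ᵥ (fun k => v (k, i)) := by
  rw [dotProduct, Fintype.sum_prod_type]
  rw [Finset.sum_comm]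
  refine Finset.sum_congr rfl fun i _ => ?_
  rw [dotProduct]
  refine Finset.sum_congr rfl fun k _ => ?_
  simp only [Pi.star_apply]
  congr 1
  rw [mulVec, dotProduct, Fintype.sum_prod_type, mulVec, dotProduct]
  refine Finset.sum_congr rfl fun l _ => ?_
  have inner : (∑ j : Fin mx,
      ((B ⊗ₖ (1 : Matrix (Fin mx) (Fin mx) ℝ)).map Complex.ofReal) (k, i) (l, j) * v (l, j))
        = ∑ j : Fin mx, (if i = j then (B.map Complex.ofReal) k l * v (l, j) else 0) := by
    refine Finset.sum_congr rfl fun j _ => ?_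
    simp only [Matrix.map_apply, kroneckerMap_apply, Matrix.one_apply]
    split_ifs with h <;> simp
  rw [inner, Finset.sum_ite_eq Finset.univ i
    (fun j => (B.map Complex.ofReal) k l * v (l, j)), if_pos (Finset.mem_univ i)]



lemma schur {n : Type*} [Fintype n] (N : Matrix n n ℝ) (K : ℝ) (hK : 0 ≤ K)
    (h1 : ∀ j, (∑ i, |N i j|) ≤ K) (hinf : ∀ i, (∑ j, |N i j|) ≤ K) (v : n → ℂ) :
    ∑ i, normSq ((N.map Complex.ofReal *ᵥ v) i) ≤ K^2 * ∑ j, normSq (v j) := by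
  have rowbound : ∀ i, normSq ((N.map Complex.ofReal *ᵥ v) i)
      ≤ (∑ j, |N i j|) * (∑ j, |N i j| * normSq (v j)) := by
    intro i
    have habs : ‖(N.map Complex.ofReal *ᵥ v) i‖
        ≤ ∑ j, |N i j| * ‖v j‖ := by
      rw [mulVec, dotProduct]
      refine (norm_sum_le _ _).trans ?_
      refine Finset.sum_le_sum fun j _ => ?_
      rw [norm_mul, Matrix.map_apply, Complex.norm_real, Real.norm_eq_abs]
    have hcs : (∑ j, |N i j| * ‖v j‖)^2
        ≤ (∑ j, |N i j|) * (∑ j, |N i j| * normSq (v j)) := by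
      have := Finset.sum_mul_sq_le_sq_mul_sq Finset.univ
        (fun j => Real.sqrt (|N i j|)) (fun j => Real.sqrt (|N i j|) * ‖v j‖)
      calc (∑ j, |N i j| * ‖v j‖)^2
          = (∑ j, Real.sqrt (|N i j|) * (Real.sqrt (|N i j|) * ‖v j‖))^2 := by
            congr 1
            refine Finset.sum_congr rfl fun j _ => ?_
            rw [← mul_assoc, Real.mul_self_sqrt (abs_nonneg _)]
        _ ≤ (∑ j, Real.sqrt (|N i j|)^2) * (∑ j, (Real.sqrt (|N i j|) * ‖v j‖)^2) :=
            this
        _ = (∑ j, |N i j|) * (∑ j, |N i j| * normSq (v j)) := by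
            congr 1
            · exact Finset.sum_congr rfl fun j _ => Real.sq_sqrt (abs_nonneg _)
            · refine Finset.sum_congr rfl fun j _ => ?_
              rw [mul_pow, Real.sq_sqrt (abs_nonneg _), Complex.sq_norm]
    calc normSq ((N.map Complex.ofReal *ᵥ v) i)
        = ‖(N.map Complex.ofReal *ᵥ v) i‖^2 := (Complex.sq_norm _).symm
      _ ≤ (∑ j, |N i j| * ‖v j‖)^2 := by
          have h0 : (0:ℝ) ≤ ‖(N.map Complex.ofReal *ᵥ v) i‖ := norm_nonneg _
          nlinarith [habs]
      _ ≤ _ := hcs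
  calc ∑ i, normSq ((N.map Complex.ofReal *ᵥ v) i)
      ≤ ∑ i, (∑ j, |N i j|) * (∑ j, |N i j| * normSq (v j)) :=
        Finset.sum_le_sum fun i _ => rowbound i
    _ ≤ ∑ i, K * (∑ j, |N i j| * normSq (v j)) := by
        refine Finset.sum_le_sum fun i _ => ?_
        refine mul_le_mul_of_nonneg_right (hinf i) ?_
        exact Finset.sum_nonneg fun j _ => mul_nonneg (abs_nonneg _) (normSq_nonneg _)
    _ = K * ∑ j, (∑ i, |N i j|) * normSq (v j) := by
        rw [← Finset.mul_sum]
        congr 1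
        rw [Finset.sum_comm]
        refine Finset.sum_congr rfl fun j _ => ?_
        rw [Finset.sum_mul]
    _ ≤ K * ∑ j, K * normSq (v j) := by
        refine mul_le_mul_of_nonneg_left ?_ hK
        exact Finset.sum_le_sum fun j _ =>
          mul_le_mul_of_nonneg_right (h1 j) (normSq_nonneg _)
    _ = K^2 * ∑ j, normSq (v j) := by rw [← Finset.mul_sum]; ring

lemma cs_dot {n : Type*} [Fintype n] (v w : n → ℂ) :
    ((star v ⬝ᵥ w).re)^2 ≤ (∑ i, normSq (v i)) * (∑ i, normSq (w i)) := by
  have h1 : (star v ⬝ᵥ w).re ≤ ∑ i, ‖v i‖ * ‖w i‖ := by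
    refine (Complex.re_le_norm _).trans ?_
    rw [dotProduct]
    refine (norm_sum_le _ _).trans ?_
    refine Finset.sum_le_sum fun i _ => ?_
    rw [norm_mul]
    simp
  have h1' : |(star v ⬝ᵥ w).re| ≤ ∑ i, ‖v i‖ * ‖w i‖ := by
    refine (Complex.abs_re_le_norm _).trans ?_
    rw [dotProduct]
    refine (norm_sum_le _ _).trans ?_
    refine Finset.sum_le_sum fun i _ => le_of_eq ?_
    rw [norm_mul]
    simp
  have hcs := Finset.sum_mul_sq_le_sq_mul_sq Finset.univ
    (fun i => ‖v i‖) (fun i => ‖w i‖)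
  have h2 : ((star v ⬝ᵥ w).re)^2 ≤ (∑ i, ‖v i‖ * ‖w i‖)^2 := by
    rw [← _root_.sq_abs]
    have hnn : (0:ℝ) ≤ ∑ i, ‖v i‖ * ‖w i‖ :=
      Finset.sum_nonneg fun i _ => mul_nonneg (norm_nonneg _) (norm_nonneg _)
    nlinarith [h1', abs_nonneg ((star v ⬝ᵥ w).re)]
  refine h2.trans (hcs.trans (le_of_eq ?_))
  congr 1
  · exact Finset.sum_congr rfl fun i _ => Complex.sq_norm _
  · exact Finset.sum_congr rfl fun i _ => Complex.sq_norm _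


end Stmt4Aux

set_option maxHeartbeats 1000000 in
open Complex Stmt4Aux in
theorem stmt4 (mx my : ℕ) (hmx : 1 ≤ mx) (hmy : 1 ≤ my)
    (Δx Δy : ℝ) (hΔx : 0 < Δx) (hΔy : 0 < Δy)
    (α β : ℝ) (hα : 0 < α) (hβ : 0 < β)
    (M P N : Matrix (Fin my × Fin mx) (Fin my × Fin mx) ℝ)
    (hM : M = kronLapD mx my Δx Δy)
    (hP : P = β • 1 - α • M)
    (hN1 : norm1 N ≤ 4 * (1 / Δx ^ 2 + 1 / Δy ^ 2))
    (hNinf : normInf N ≤ 4 * (1 / Δx ^ 2 + 1 / Δy ^ 2)) :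
    specRad ((-α) • (P⁻¹ * N)) < (4 * α / β) * (1 / Δx ^ 2 + 1 / Δy ^ 2) := by
  classical
  haveI : Nonempty (Fin my × Fin mx) := ⟨(⟨0, hmy⟩, ⟨0, hmx⟩)⟩
  set K : ℝ := 4 * (1 / Δx ^ 2 + 1 / Δy ^ 2) with hKdef
  have hK0 : (0:ℝ) < K := by positivity
  have hnsqpos : ∀ v : Fin my × Fin mx → ℂ, v ≠ 0 → 0 < ∑ p, normSq (v p) := by
    intro v hv
    obtain ⟨p, hp⟩ := Function.ne_iff.mp hv
    exact Finset.sum_pos' (fun q _ => normSq_nonneg _)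
      ⟨p, Finset.mem_univ p, normSq_pos.mpr (by simpa using hp)⟩
  have hMneg : ∀ v : Fin my × Fin mx → ℂ, v ≠ 0 →
      (star v ⬝ᵥ (M.map Complex.ofReal) *ᵥ v).re < 0 := by
    intro v hv
    rw [hM]
    have hmap : (kronLapD mx my Δx Δy).map Complex.ofReal
        = ((1 : Matrix (Fin my) (Fin my) ℝ) ⊗ₖ dirLap mx Δx).map Complex.ofReal
          + (dirLap my Δy ⊗ₖ (1 : Matrix (Fin mx) (Fin mx) ℝ)).map Complex.ofReal := by
      rw [kronLapD]
      exact Matrix.map_add _ (fun a b => by push_cast; ring) _ _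
    rw [hmap, Matrix.add_mulVec, dotProduct_add, Complex.add_re,
      quad_kron_left, quad_kron_right, Complex.re_sum, Complex.re_sum]
    obtain ⟨p, hp⟩ := Function.ne_iff.mp hv
    have h1 : (∑ k : Fin my, ((star (fun i => v (k,i)) ⬝ᵥ
        ((dirLap mx Δx).map Complex.ofReal) *ᵥ (fun i => v (k,i))).re)) < 0 := by
      have hlt : ∑ k : Fin my, ((star (fun i => v (k,i)) ⬝ᵥ
          ((dirLap mx Δx).map Complex.ofReal) *ᵥ (fun i => v (k,i))).re)
            < ∑ _k : Fin my, (0:ℝ) := by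
        refine Finset.sum_lt_sum (fun k _ => (dir_quad Δx hΔx _).1) ⟨p.1, Finset.mem_univ _, ?_⟩
        refine (dir_quad Δx hΔx _).2 ?_
        exact Function.ne_iff.mpr ⟨p.2, by simpa using hp⟩
      simpa using hlt
    have h2 : (∑ i : Fin mx, ((star (fun k => v (k,i)) ⬝ᵥ
        ((dirLap my Δy).map Complex.ofReal) *ᵥ (fun k => v (k,i))).re)) ≤ 0 :=
      Finset.sum_nonpos fun i _ => (dir_quad Δy hΔy _).1
    linarith
  have hPmap : P.map Complex.ofReal
      = (β:ℂ) • (1 : Matrix (Fin my × Fin mx) (Fin my × Fin mx) ℂ)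
        - (α:ℂ) • (M.map Complex.ofReal) := by
    rw [hP]
    ext p q
    simp only [Matrix.map_apply, Matrix.sub_apply, Matrix.smul_apply, Matrix.one_apply,
      smul_eq_mul, Complex.ofReal_sub, Complex.ofReal_mul]
    split_ifs <;> simp
  have quadP : ∀ v : Fin my × Fin mx → ℂ, star v ⬝ᵥ (P.map Complex.ofReal) *ᵥ v
      = (β:ℂ) * (star v ⬝ᵥ v) - (α:ℂ) * (star v ⬝ᵥ (M.map Complex.ofReal) *ᵥ v) := by
    intro v
    rw [hPmap, Matrix.sub_mulVec, dotProduct_sub, Matrix.smul_mulVec,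
      Matrix.smul_mulVec, dotProduct_smul, dotProduct_smul,
      smul_eq_mul, smul_eq_mul, Matrix.one_mulVec]
  have hPq : ∀ v : Fin my × Fin mx → ℂ, v ≠ 0 →
      β * (∑ p, normSq (v p)) < (star v ⬝ᵥ (P.map Complex.ofReal) *ᵥ v).re := by
    intro v hv
    rw [quadP v, Complex.sub_re, Complex.re_ofReal_mul, Complex.re_ofReal_mul, re_star_dot]
    have h3 : 0 < α * (-((star v ⬝ᵥ (M.map Complex.ofReal) *ᵥ v).re)) :=
      mul_pos hα (by linarith [hMneg v hv])
    linarith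
  have hPdet : IsUnit P.det := by
    rw [isUnit_iff_ne_zero]
    intro hdet
    obtain ⟨u, hu0, huP⟩ := Matrix.exists_mulVec_eq_zero_iff.mpr hdet
    set uc : Fin my × Fin mx → ℂ := fun p => ((u p : ℝ) : ℂ) with hucdef
    have huc0 : uc ≠ 0 := by
      obtain ⟨p, hp⟩ := Function.ne_iff.mp hu0
      exact Function.ne_iff.mpr ⟨p, by simpa [hucdef] using hp⟩
    have hmv : (P.map Complex.ofReal) *ᵥ uc = 0 := by
      funext p
      have h := (RingHom.map_mulVec Complex.ofRealHom P u p).symm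
      rw [huP] at h
      simpa [hucdef, Function.comp_def, show ⇑Complex.ofRealHom = Complex.ofReal from rfl] using h
    have hcontr := hPq uc huc0
    rw [hmv] at hcontr
    simp only [dotProduct_zero, Complex.zero_re] at hcontr
    nlinarith [hnsqpos uc huc0]
  haveI : Invertible P := P.invertibleOfIsUnitDet hPdet
  have hPS : P * ((-α) • (P⁻¹ * N)) = (-α) • N := by
    rw [Matrix.mul_smul, Matrix.mul_inv_cancel_left_of_invertible]
  have key : ∀ μ ∈ spectrum ℂ (((-α) • (P⁻¹ * N) :
      Matrix (Fin my × Fin mx) (Fin my × Fin mx) ℝ).map Complex.ofReal),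
      ‖μ‖ < 4 * α / β * (1 / Δx ^ 2 + 1 / Δy ^ 2) := by
    intro μ hμ
    have hgoal_eq : 4 * α / β * (1 / Δx ^ 2 + 1 / Δy ^ 2) = α * K / β := by
      rw [hKdef]; ring
    by_cases hμ0 : μ = 0
    · rw [hμ0, norm_zero, hgoal_eq]; positivity
    rw [spectrum.mem_iff] at hμ
    have hdet0 : ((algebraMap ℂ (Matrix (Fin my × Fin mx) (Fin my × Fin mx) ℂ)) μ
        - ((-α) • (P⁻¹ * N) : Matrix (Fin my × Fin mx) (Fin my × Fin mx) ℝ).map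
          Complex.ofReal).det = 0 := by
      by_contra h
      exact hμ ((Matrix.isUnit_iff_isUnit_det _).mpr (isUnit_iff_ne_zero.mpr h))
    obtain ⟨v, hv0, hveq⟩ := Matrix.exists_mulVec_eq_zero_iff.mpr hdet0
    have heig : (((-α) • (P⁻¹ * N) :
        Matrix (Fin my × Fin mx) (Fin my × Fin mx) ℝ).map Complex.ofReal) *ᵥ v = μ • v := by
      rw [Matrix.sub_mulVec] at hveq
      have halg : (algebraMap ℂ (Matrix (Fin my × Fin mx) (Fin my × Fin mx) ℂ)) μ *ᵥ v
          = μ • v := by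
        rw [Algebra.algebraMap_eq_smul_one, Matrix.smul_mulVec, Matrix.one_mulVec]
      rw [halg] at hveq
      exact (sub_eq_zero.mp hveq).symm
    have hmulmap : (P.map Complex.ofReal) * (((-α) • (P⁻¹ * N) :
        Matrix (Fin my × Fin mx) (Fin my × Fin mx) ℝ).map Complex.ofReal)
        = ((-α:ℝ):ℂ) • (N.map Complex.ofReal) := by
      have hco : ⇑Complex.ofRealHom = Complex.ofReal := funext fun _ => rfl
      have h1 : (P.map ⇑Complex.ofRealHom) * (((-α) • (P⁻¹ * N) :
          Matrix (Fin my × Fin mx) (Fin my × Fin mx) ℝ).map ⇑Complex.ofRealHom)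
          = ((-α) • N : Matrix (Fin my × Fin mx) (Fin my × Fin mx) ℝ).map ⇑Complex.ofRealHom := by
        rw [← Matrix.map_mul, hPS]
      rw [hco] at h1
      have h2 : ((-α) • N : Matrix (Fin my × Fin mx) (Fin my × Fin mx) ℝ).map Complex.ofReal
          = ((-α:ℝ):ℂ) • (N.map Complex.ofReal) := by
        ext p q
        simp [Matrix.map_apply, Matrix.smul_apply, smul_eq_mul]
      rw [h1, h2]
    have hPv : μ • ((P.map Complex.ofReal) *ᵥ v)
        = ((-α:ℝ):ℂ) • ((N.map Complex.ofReal) *ᵥ v) := by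
      calc μ • ((P.map Complex.ofReal) *ᵥ v)
          = (P.map Complex.ofReal) *ᵥ (μ • v) := by rw [Matrix.mulVec_smul]
        _ = (P.map Complex.ofReal) *ᵥ ((((-α) • (P⁻¹ * N) :
              Matrix (Fin my × Fin mx) (Fin my × Fin mx) ℝ).map Complex.ofReal) *ᵥ v) := by
            rw [heig]
        _ = ((P.map Complex.ofReal) * (((-α) • (P⁻¹ * N) :
              Matrix (Fin my × Fin mx) (Fin my × Fin mx) ℝ).map Complex.ofReal)) *ᵥ v := by
            rw [Matrix.mulVec_mulVec]
        _ = (((-α:ℝ):ℂ) • (N.map Complex.ofReal)) *ᵥ v := by rw [hmulmap]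
        _ = ((-α:ℝ):ℂ) • ((N.map Complex.ofReal) *ᵥ v) := by rw [Matrix.smul_mulVec]
    have hSvpos := hnsqpos v hv0
    have hnsq : normSq μ * (∑ p, normSq (((P.map Complex.ofReal) *ᵥ v) p))
        = α^2 * (∑ p, normSq (((N.map Complex.ofReal) *ᵥ v) p)) := by
      have h := congrArg (fun u : (Fin my × Fin mx) → ℂ => ∑ p, normSq (u p)) hPv
      simp only [Pi.smul_apply, smul_eq_mul, normSq_mul] at h
      rw [← Finset.mul_sum, ← Finset.mul_sum] at h
      have hns : normSq ((-α:ℝ):ℂ) = α^2 := by rw [normSq_ofReal]; ring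
      rw [hns] at h
      exact h
    have hwlow : β^2 * (∑ p, normSq (v p)) < ∑ p, normSq (((P.map Complex.ofReal) *ᵥ v) p) := by
      have hq := hPq v hv0
      have hcs := cs_dot v ((P.map Complex.ofReal) *ᵥ v)
      have h0 : 0 < β * (∑ p, normSq (v p)) := mul_pos hβ hSvpos
      have h1 : (β * (∑ p, normSq (v p)))^2
          < ((star v ⬝ᵥ ((P.map Complex.ofReal) *ᵥ v)).re)^2 := by nlinarith [hq]
      have h2 : (β * (∑ p, normSq (v p)))^2
          ≤ (∑ p, normSq (v p)) * (∑ p, normSq (((P.map Complex.ofReal) *ᵥ v) p)) :=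
        le_of_lt (lt_of_lt_of_le h1 hcs)
      nlinarith [hSvpos]
    have hzhigh : ∑ p, normSq (((N.map Complex.ofReal) *ᵥ v) p)
        ≤ K^2 * (∑ p, normSq (v p)) := by
      have hn1 : norm1 N = ⨆ j, ∑ i, |N i j| := rfl
      have hninf : normInf N = ⨆ i, ∑ j, |N i j| := rfl
      refine schur N K hK0.le ?_ ?_ v
      · intro j
        refine le_trans ?_ hN1
        rw [hn1]
        exact le_ciSup (f := fun j => ∑ i, |N i j|) (Set.Finite.bddAbove (Set.finite_range _)) j
      · intro i
        refine le_trans ?_ hNinf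
        rw [hninf]
        exact le_ciSup (f := fun i => ∑ j, |N i j|) (Set.Finite.bddAbove (Set.finite_range _)) i
    have hμpos : 0 < normSq μ := normSq_pos.mpr hμ0
    have final : normSq μ * β^2 < α^2 * K^2 := by
      have c1 : normSq μ * (β^2 * (∑ p, normSq (v p)))
          < normSq μ * (∑ p, normSq (((P.map Complex.ofReal) *ᵥ v) p)) :=
        (mul_lt_mul_iff_right₀ hμpos).mpr hwlow
      have c2 : α^2 * (∑ p, normSq (((N.map Complex.ofReal) *ᵥ v) p))
          ≤ α^2 * (K^2 * (∑ p, normSq (v p))) :=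
        mul_le_mul_of_nonneg_left hzhigh (by positivity)
      rw [hnsq] at c1
      nlinarith [hSvpos]
    have habs2 : (‖μ‖ * β)^2 < (α*K)^2 := by
      have hsq : (‖μ‖)^2 = normSq μ := Complex.sq_norm μ
      nlinarith [final]
    have habs : ‖μ‖ * β < α * K :=
      lt_of_pow_lt_pow_left₀ 2 (by positivity) habs2
    rw [hgoal_eq, lt_div_iff₀ hβ]
    exact habs
  have hspec_rfl : specRad ((-α) • (P⁻¹ * N)) = sSup ((fun z : ℂ => ‖z‖) '' spectrum ℂ
      ((((-α) • (P⁻¹ * N) : Matrix (Fin my × Fin mx) (Fin my × Fin mx) ℝ)).map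
        Complex.ofReal)) := rfl
  have hfin : (spectrum ℂ ((((-α) • (P⁻¹ * N) :
      Matrix (Fin my × Fin mx) (Fin my × Fin mx) ℝ)).map Complex.ofReal)).Finite :=
    Matrix.finite_spectrum _
  haveI : Nontrivial ((Fin my × Fin mx) → ℂ) := Function.nontrivial
  have hne : (spectrum ℂ ((((-α) • (P⁻¹ * N) :
      Matrix (Fin my × Fin mx) (Fin my × Fin mx) ℝ)).map Complex.ofReal)).Nonempty := by
    have heq := AlgEquiv.spectrum_eq (Matrix.toLinAlgEquiv (Pi.basisFun ℂ (Fin my × Fin mx)))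
      ((((-α) • (P⁻¹ * N) : Matrix (Fin my × Fin mx) (Fin my × Fin mx) ℝ)).map Complex.ofReal)
    obtain ⟨c, hc⟩ := Module.End.exists_eigenvalue
      ((Matrix.toLinAlgEquiv (Pi.basisFun ℂ (Fin my × Fin mx)))
        ((((-α) • (P⁻¹ * N) : Matrix (Fin my × Fin mx) (Fin my × Fin mx) ℝ)).map Complex.ofReal))
    exact ⟨c, heq ▸ hc.mem_spectrum⟩
  obtain ⟨μ, hμs, hμe⟩ := (hne.image (fun z : ℂ => ‖z‖)).csSup_mem (hfin.image _)
  rw [hspec_rfl, ← hμe]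
  exact key μ hμs
end

section
/- Let γ = 1 or γ = 3/2, let D_φ, D_c, w, Δt > 0, let m_x, m_y ≥ 1, Δx, Δy > 0, set h = min(Δx, Δy), let M be the Dirichlet Kronecker-sum Laplacian of sizes (m_x, m_y) and steps (Δx, Δy), and let N be a real matrix of the same size with ‖N‖₁ ≤ 4·(1/Δx² + 1/Δy²) and ‖N‖_∞ ≤ 4·(1/Δx² + 1/Δy²). If either h² > 8·D_φ/w or Δt < γ·h²/(8·D_φ − w·h²), and furthermore Δt < γ·h²/(8·D_c), then the spectral radii of the two iteration matrices Δt·D_φ·((γ + w·Δt)·I − Δt·D_φ·M)⁻¹·N and Δt·D_c·(γ·I − Δt·D_c·M)⁻¹·N are both strictly less than 1. -/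
open Matrix Kronecker

noncomputable def Complex.abs : AbsoluteValue ℂ ℝ := NormedField.toAbsoluteValue ℂ

@[simp] lemma Complex.abs_apply (z : ℂ) : Complex.abs z = ‖z‖ := rfl

lemma Complex.abs_ofReal (x : ℝ) : Complex.abs (x : ℂ) = |x| := by simp

-- lower bound claim for SDD matrices
lemma sdd_lb {n : Type*} [Fintype n] [DecidableEq n]
    (B : Matrix n n ℝ) (α : ℝ)
    (hSDD : ∀ i, (∑ j ∈ Finset.univ.erase i, |B i j|) + α ≤ |B i i|)
    (v : n → ℂ) (i : n) (hmax : ∀ j, Complex.abs (v j) ≤ Complex.abs (v i)) :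
    α * Complex.abs (v i) ≤ Complex.abs (((B.map (Complex.ofReal)).mulVec v) i) := by
  have habs : 0 ≤ Complex.abs (v i) := Complex.abs.nonneg _
  have hsplit : ((B.map (Complex.ofReal)).mulVec v) i
      = (B i i : ℂ) * v i + ∑ j ∈ Finset.univ.erase i, (B i j : ℂ) * v j := by
    rw [Matrix.mulVec]
    simp only [dotProduct, Matrix.map_apply]
    rw [← Finset.add_sum_erase _ _ (Finset.mem_univ i)]
  have h1 : Complex.abs (∑ j ∈ Finset.univ.erase i, (B i j : ℂ) * v j)
      ≤ (∑ j ∈ Finset.univ.erase i, |B i j|) * Complex.abs (v i) := by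
    calc Complex.abs (∑ j ∈ Finset.univ.erase i, (B i j : ℂ) * v j)
        ≤ ∑ j ∈ Finset.univ.erase i, Complex.abs ((B i j : ℂ) * v j) :=
          Complex.abs.sum_le _ _
      _ ≤ ∑ j ∈ Finset.univ.erase i, |B i j| * Complex.abs (v i) := by
          apply Finset.sum_le_sum
          intro j _
          rw [_root_.map_mul, Complex.abs_ofReal]
          exact mul_le_mul_of_nonneg_left (hmax j) (abs_nonneg _)
      _ = (∑ j ∈ Finset.univ.erase i, |B i j|) * Complex.abs (v i) := by
          rw [Finset.sum_mul]
  have h2 : Complex.abs ((B i i : ℂ) * v i) = |B i i| * Complex.abs (v i) := by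
    rw [_root_.map_mul, Complex.abs_ofReal]
  have h3 : Complex.abs ((B i i : ℂ) * v i)
      ≤ Complex.abs (((B.map (Complex.ofReal)).mulVec v) i)
        + Complex.abs (∑ j ∈ Finset.univ.erase i, (B i j : ℂ) * v j) := by
    calc Complex.abs ((B i i : ℂ) * v i)
        = Complex.abs ((((B.map (Complex.ofReal)).mulVec v) i)
            - ∑ j ∈ Finset.univ.erase i, (B i j : ℂ) * v j) := by rw [hsplit]; ring_nf
      _ ≤ _ := Complex.abs.sub_le_add _ _
  nlinarith [hSDD i, mul_le_mul_of_nonneg_right (hSDD i) habs]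


lemma key_specRad_le {n : Type*} [Fintype n] [DecidableEq n]
    (B N : Matrix n n ℝ) (c α r : ℝ) (hc : 0 < c) (hα : 0 < α) (hr : 0 ≤ r)
    (hSDD : ∀ i, (∑ j ∈ Finset.univ.erase i, |B i j|) + α ≤ |B i i|)
    (hN : ∀ i, c * (∑ j, |N i j|) ≤ r * α) :

    specRad (c • (B⁻¹ * N)) ≤ r := by
  have map_mul' : ∀ (X Y : Matrix n n ℝ),
      (X * Y).map Complex.ofReal = X.map Complex.ofReal * Y.map Complex.ofReal := by
    intro X Y; ext i j
    simp [Matrix.mul_apply, Matrix.map_apply]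
  -- invertibility of the complexification
  have hdet : (B.map Complex.ofReal).det ≠ 0 := by
    intro h0
    obtain ⟨v, hv0, hv⟩ := Matrix.exists_mulVec_eq_zero_iff.2 h0
    obtain ⟨j0, hj0⟩ := Function.ne_iff.1 hv0
    obtain ⟨i, -, hi⟩ := Finset.exists_max_image Finset.univ
      (fun j => Complex.abs (v j)) ⟨j0, Finset.mem_univ j0⟩
    have hb := sdd_lb B α hSDD v i (fun j => hi j (Finset.mem_univ j))
    rw [hv] at hb
    simp only [Pi.zero_apply, map_zero] at hb
    have hvj0 : 0 < Complex.abs (v j0) := by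
      simpa using (Complex.abs.pos (by simpa using hj0))
    have hvi : 0 < Complex.abs (v i) := lt_of_lt_of_le hvj0 (hi j0 (Finset.mem_univ j0))
    nlinarith
  have hBunit : IsUnit (B.map Complex.ofReal).det := isUnit_iff_ne_zero.2 hdet
  have hdetB : B.det ≠ 0 := by
    intro h0; apply hdet
    have : (B.map Complex.ofReal).det = Complex.ofReal B.det :=
      (RingHom.map_det Complex.ofRealHom B).symm
    rw [this, h0]; simp
  have hBinv : B.map Complex.ofReal * (B⁻¹).map Complex.ofReal = 1 := by
    rw [← map_mul', Matrix.mul_nonsing_inv B (isUnit_iff_ne_zero.2 hdetB)]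
    ext i j; simp [Matrix.map_apply, Matrix.one_apply]; split <;> simp
  have hinv : (B.map Complex.ofReal)⁻¹ = (B⁻¹).map Complex.ofReal :=
    Matrix.inv_eq_right_inv hBinv
  have hAc : (c • (B⁻¹ * N)).map Complex.ofReal
      = (c : ℂ) • ((B.map Complex.ofReal)⁻¹ * N.map Complex.ofReal) := by
    rw [hinv, ← map_mul']
    ext i j; simp [Matrix.map_apply]
  apply Real.sSup_le _ hr
  rintro z ⟨μ, hμ, rfl⟩
  rw [hAc] at hμ
  have hμ' : μ ∈ spectrum ℂ (Matrix.toLinAlgEquiv'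
      ((c : ℂ) • ((B.map Complex.ofReal)⁻¹ * N.map Complex.ofReal))) := by
    rwa [AlgEquiv.spectrum_eq]
  obtain ⟨v, hv⟩ :=
    (Module.End.hasEigenvalue_iff_mem_spectrum.2 hμ').exists_hasEigenvector
  have hv0 : v ≠ 0 := hv.right
  have hveq : ((c : ℂ) • ((B.map Complex.ofReal)⁻¹ * N.map Complex.ofReal)).mulVec v
      = μ • v := by
    rw [← Matrix.toLinAlgEquiv'_apply]; exact hv.apply_eq_smul
  have h4 : (c : ℂ) • ((N.map Complex.ofReal).mulVec v)
      = μ • ((B.map Complex.ofReal).mulVec v) := by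
    have h5 := congrArg (fun x => (B.map Complex.ofReal).mulVec x) hveq
    simp only [Matrix.mulVec_smul, Matrix.mulVec_mulVec] at h5
    rw [Matrix.mul_smul, Matrix.smul_mulVec, ← Matrix.mul_assoc,
      Matrix.mul_nonsing_inv _ hBunit, Matrix.one_mul] at h5
    exact h5
  obtain ⟨j0, hj0⟩ := Function.ne_iff.1 hv0
  obtain ⟨i, -, hi⟩ := Finset.exists_max_image Finset.univ
    (fun j => Complex.abs (v j)) ⟨j0, Finset.mem_univ j0⟩
  have hmax : ∀ j, Complex.abs (v j) ≤ Complex.abs (v i) := fun j => hi j (Finset.mem_univ j)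
  have hvj0 : 0 < Complex.abs (v j0) := by
    simpa using (Complex.abs.pos (by simpa using hj0))
  have hvi : 0 < Complex.abs (v i) := lt_of_lt_of_le hvj0 (hmax j0)
  have hb := sdd_lb B α hSDD v i hmax
  have hNbound : Complex.abs (((N.map Complex.ofReal).mulVec v) i)
      ≤ (∑ j, |N i j|) * Complex.abs (v i) := by
    rw [Matrix.mulVec]
    calc Complex.abs (∑ j, (N i j : ℂ) * v j)
        ≤ ∑ j, Complex.abs ((N i j : ℂ) * v j) := Complex.abs.sum_le _ _
      _ ≤ ∑ j, |N i j| * Complex.abs (v i) := by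
          apply Finset.sum_le_sum
          intro j _
          rw [_root_.map_mul, Complex.abs_ofReal]
          exact mul_le_mul_of_nonneg_left (hmax j) (abs_nonneg _)
      _ = (∑ j, |N i j|) * Complex.abs (v i) := by rw [Finset.sum_mul]
  have key : Complex.abs μ * (α * Complex.abs (v i)) ≤ r * (α * Complex.abs (v i)) := by
    calc Complex.abs μ * (α * Complex.abs (v i))
        ≤ Complex.abs μ * Complex.abs (((B.map Complex.ofReal).mulVec v) i) :=
          mul_le_mul_of_nonneg_left hb (Complex.abs.nonneg _)
      _ = Complex.abs ((μ • (B.map Complex.ofReal).mulVec v) i) := by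
          simp [_root_.map_mul]
      _ = Complex.abs (((c : ℂ) • (N.map Complex.ofReal).mulVec v) i) := by rw [h4]
      _ = c * Complex.abs (((N.map Complex.ofReal).mulVec v) i) := by
          simp [_root_.map_mul, Complex.abs_ofReal, abs_of_pos hc]
      _ ≤ c * ((∑ j, |N i j|) * Complex.abs (v i)) :=
          mul_le_mul_of_nonneg_left hNbound hc.le
      _ = (c * (∑ j, |N i j|)) * Complex.abs (v i) := by ring
      _ ≤ (r * α) * Complex.abs (v i) :=
          mul_le_mul_of_nonneg_right (hN i) hvi.le
      _ = r * (α * Complex.abs (v i)) := by ring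
  have hpos : 0 < α * Complex.abs (v i) := mul_pos hα hvi
  exact le_of_mul_le_mul_right (by exact key) hpos


lemma dirLap_offdiag {m : ℕ} (Δ : ℝ) {i j : Fin m} (hij : i ≠ j) : 0 ≤ dirLap m Δ i j := by
  simp only [dirLap, Matrix.of_apply, if_neg hij]
  split
  · positivity
  · exact le_rfl

lemma dirLap_rowsum {m : ℕ} (Δ : ℝ) (i : Fin m) : ∑ j, dirLap m Δ i j ≤ 0 := by
  have hs : ∑ j, dirLap m Δ i j
      = dirLap m Δ i i + ∑ j ∈ Finset.univ.erase i, dirLap m Δ i j :=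
    (Finset.add_sum_erase _ _ (Finset.mem_univ i)).symm
  have hsq : (0:ℝ) ≤ 1 / Δ ^ 2 := by positivity
  have hoff : ∑ j ∈ Finset.univ.erase i, dirLap m Δ i j ≤ 2 * (1 / Δ ^ 2) := by
    have heq : ∀ j ∈ Finset.univ.erase i, dirLap m Δ i j
        = if ((i : ℕ) + 1 = (j : ℕ) ∨ (j : ℕ) + 1 = (i : ℕ)) then 1 / Δ ^ 2 else 0 := by
      intro j hj
      have hij : i ≠ j := (Finset.ne_of_mem_erase hj).symm
      simp only [dirLap, Matrix.of_apply, if_neg hij]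
    rw [Finset.sum_congr rfl heq, ← Finset.sum_filter, Finset.sum_const, nsmul_eq_mul]
    have h1 : ((Finset.univ.erase i).filter
        (fun (j : Fin m) => (i : ℕ) + 1 = (j : ℕ))).card ≤ 1 := by
      apply Finset.card_le_one.2
      intro a ha b hb
      simp only [Finset.mem_filter] at ha hb
      exact Fin.ext (ha.2.symm.trans hb.2)
    have h2 : ((Finset.univ.erase i).filter
        (fun (j : Fin m) => (j : ℕ) + 1 = (i : ℕ))).card ≤ 1 := by
      apply Finset.card_le_one.2
      intro a ha b hb
      simp only [Finset.mem_filter] at ha hb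
      exact Fin.ext (Nat.succ_injective (ha.2.trans hb.2.symm))
    have hcard : ((Finset.univ.erase i).filter
        (fun (j : Fin m) => (i : ℕ) + 1 = (j : ℕ) ∨ (j : ℕ) + 1 = (i : ℕ))).card ≤ 2 := by
      rw [Finset.filter_or]
      refine le_trans (Finset.card_union_le _ _) ?_
      omega
    exact mul_le_mul_of_nonneg_right (by exact_mod_cast hcard) hsq
  have hdiag : dirLap m Δ i i = -2 / Δ ^ 2 := by simp [dirLap]
  rw [hs, hdiag]
  have hz : (-2) / Δ ^ 2 + 2 * (1 / Δ ^ 2) = 0 := by ring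
  linarith

lemma kron_offdiag {mx my : ℕ} (Δx Δy : ℝ) {i j : Fin my × Fin mx} (hij : i ≠ j) :
    0 ≤ kronLapD mx my Δx Δy i j := by
  obtain ⟨iy, ix⟩ := i
  obtain ⟨jy, jx⟩ := j
  simp only [kronLapD, Matrix.add_apply, Matrix.kroneckerMap_apply]
  by_cases hy : iy = jy
  · subst hy
    have hx : ix ≠ jx := fun h => hij (by rw [h])
    rw [Matrix.one_apply_eq, Matrix.one_apply_ne hx, one_mul, mul_zero, add_zero]
    exact dirLap_offdiag _ hx
  · rw [Matrix.one_apply_ne hy, zero_mul, zero_add]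
    by_cases hx : ix = jx
    · rw [hx, Matrix.one_apply_eq, mul_one]; exact dirLap_offdiag _ hy
    · rw [Matrix.one_apply_ne hx, mul_zero]

lemma kron_rowsum {mx my : ℕ} (Δx Δy : ℝ) (i : Fin my × Fin mx) :
    ∑ j, kronLapD mx my Δx Δy i j ≤ 0 := by
  obtain ⟨iy, ix⟩ := i
  have hsum : ∑ j : Fin my × Fin mx, kronLapD mx my Δx Δy (iy, ix) j
      = (∑ jx, dirLap mx Δx ix jx) + (∑ jy, dirLap my Δy iy jy) := by
    have one_rowsum : ∀ {k : ℕ} (a : Fin k), ∑ b, (1 : Matrix (Fin k) (Fin k) ℝ) a b = 1 := by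
      intro k a
      simp [Matrix.one_apply, Finset.sum_ite_eq]
    rw [Fintype.sum_prod_type]
    simp only [kronLapD, Matrix.add_apply, Matrix.kroneckerMap_apply,
      Finset.sum_add_distrib, ← Finset.mul_sum, one_rowsum, mul_one]
    congr 1
    rw [Finset.sum_comm]
    simp only [← Finset.sum_mul, one_rowsum, one_mul]
  rw [hsum]
  linarith [dirLap_rowsum (m := mx) Δx ix, dirLap_rowsum (m := my) Δy iy]


lemma sdd_of {n : Type*} [Fintype n] [DecidableEq n] (M : Matrix n n ℝ) (c β : ℝ)
    (hc : 0 < c) (hβ : 0 < β)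
    (hoff : ∀ i j, i ≠ j → 0 ≤ M i j) (hrow : ∀ i, ∑ j, M i j ≤ 0) (i : n) :
    (∑ j ∈ Finset.univ.erase i, |(β • (1 : Matrix n n ℝ) - c • M) i j|) + β
      ≤ |(β • (1 : Matrix n n ℝ) - c • M) i i| := by
  have hMoffsum : (0:ℝ) ≤ ∑ j ∈ Finset.univ.erase i, M i j :=
    Finset.sum_nonneg fun j hj => hoff i j (Finset.ne_of_mem_erase hj).symm
  have hsplit : M i i + ∑ j ∈ Finset.univ.erase i, M i j = ∑ j, M i j :=
    Finset.add_sum_erase _ _ (Finset.mem_univ i)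
  have hMii : M i i ≤ 0 := by linarith [hrow i]
  have herase : ∑ j ∈ Finset.univ.erase i, M i j ≤ -M i i := by linarith [hrow i]
  have hBii : (β • (1 : Matrix n n ℝ) - c • M) i i = β - c * M i i := by
    simp [Matrix.sub_apply, Matrix.smul_apply, Matrix.one_apply_eq, smul_eq_mul]
  have habs : |(β • (1 : Matrix n n ℝ) - c • M) i i| = β - c * M i i := by
    rw [hBii]; apply abs_of_pos; nlinarith
  have hsum : ∑ j ∈ Finset.univ.erase i, |(β • (1 : Matrix n n ℝ) - c • M) i j|
      = c * ∑ j ∈ Finset.univ.erase i, M i j := by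
    rw [Finset.mul_sum]
    apply Finset.sum_congr rfl
    intro j hj
    have hji : j ≠ i := Finset.ne_of_mem_erase hj
    have hBij : (β • (1 : Matrix n n ℝ) - c • M) i j = -(c * M i j) := by
      simp [Matrix.sub_apply, Matrix.smul_apply, Matrix.one_apply_ne (Ne.symm hji), smul_eq_mul]
    rw [hBij, abs_neg, abs_of_nonneg (mul_nonneg hc.le (hoff i j (Ne.symm hji)))]
  rw [hsum, habs]
  nlinarith [mul_le_mul_of_nonneg_left herase hc.le]

lemma rowsum_le_normInf {n : Type*} [Fintype n] (N : Matrix n n ℝ) (i : n) :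
    ∑ j, |N i j| ≤ normInf N := by
  have := le_ciSup (f := fun i => ∑ j, |N i j|) (Set.Finite.bddAbove (Set.finite_range _)) i
  simpa [normInf] using this

lemma specRad_lt_one {n : Type*} [Fintype n] [DecidableEq n]
    (M N : Matrix n n ℝ) (c β q : ℝ) (hc : 0 < c) (hβ : 0 < β)
    (hoff : ∀ i j, i ≠ j → 0 ≤ M i j) (hrow : ∀ i, ∑ j, M i j ≤ 0)
    (hq : 0 ≤ q) (hNq : normInf N ≤ q) (hlt : c * q < β) :
    specRad (c • ((β • (1 : Matrix n n ℝ) - c • M)⁻¹ * N)) < 1 := by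
  have hr0 : 0 ≤ c * q / β := by positivity
  have hspec : specRad (c • ((β • (1 : Matrix n n ℝ) - c • M)⁻¹ * N)) ≤ c * q / β := by
    apply key_specRad_le _ N c β _ hc hβ hr0
    · exact sdd_of M c β hc hβ hoff hrow
    · intro i
      rw [div_mul_cancel₀ _ hβ.ne']
      exact mul_le_mul_of_nonneg_left ((rowsum_le_normInf N i).trans hNq) hc.le
  exact lt_of_le_of_lt hspec ((div_lt_one hβ).2 hlt)

theorem stmt5 (γ : ℝ) (hγ : γ = 1 ∨ γ = 3 / 2)
    (Dφ Dc w Δt : ℝ) (hDφ : 0 < Dφ) (hDc : 0 < Dc) (hw : 0 < w) (hΔt : 0 < Δt)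
    (mx my : ℕ) (hmx : 1 ≤ mx) (hmy : 1 ≤ my)
    (Δx Δy : ℝ) (hΔx : 0 < Δx) (hΔy : 0 < Δy)
    (h : ℝ) (hh : h = min Δx Δy)
    (M N : Matrix (Fin my × Fin mx) (Fin my × Fin mx) ℝ)
    (hM : M = kronLapD mx my Δx Δy)
    (hN1 : norm1 N ≤ 4 * (1 / Δx ^ 2 + 1 / Δy ^ 2))
    (hNinf : normInf N ≤ 4 * (1 / Δx ^ 2 + 1 / Δy ^ 2))
    (hcond1 : h ^ 2 > 8 * Dφ / w ∨ Δt < γ * h ^ 2 / (8 * Dφ - w * h ^ 2))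
    (hcond2 : Δt < γ * h ^ 2 / (8 * Dc)) :
    specRad ((Δt * Dφ) • (((γ + w * Δt) • 1 - (Δt * Dφ) • M)⁻¹ * N)) < 1 ∧
      specRad ((Δt * Dc) • ((γ • 1 - (Δt * Dc) • M)⁻¹ * N)) < 1 := by
  subst hM
  have hγpos : 0 < γ := by rcases hγ with rfl | rfl <;> norm_num
  have hhx : h ≤ Δx := hh ▸ min_le_left _ _
  have hhy : h ≤ Δy := hh ▸ min_le_right _ _
  have hhpos : 0 < h := hh ▸ lt_min hΔx hΔy
  have hq0 : (0:ℝ) ≤ 4 * (1 / Δx ^ 2 + 1 / Δy ^ 2) := by positivity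
  have hfour : 4 * (1 / Δx ^ 2 + 1 / Δy ^ 2) ≤ 8 / h ^ 2 := by
    have h1 : 1 / Δx ^ 2 ≤ 1 / h ^ 2 := by
      apply one_div_le_one_div_of_le (by positivity); nlinarith
    have h2 : 1 / Δy ^ 2 ≤ 1 / h ^ 2 := by
      apply one_div_le_one_div_of_le (by positivity); nlinarith
    have h3 : (8:ℝ) / h ^ 2 = 4 * (1 / h ^ 2 + 1 / h ^ 2) := by ring
    linarith
  have hoff : ∀ i j, i ≠ j → 0 ≤ kronLapD mx my Δx Δy i j := fun i j hij => kron_offdiag _ _ hij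
  have hrow : ∀ i, ∑ j, kronLapD mx my Δx Δy i j ≤ 0 := kron_rowsum _ _
  have hcφ : 0 < Δt * Dφ := mul_pos hΔt hDφ
  have hcc : 0 < Δt * Dc := mul_pos hΔt hDc
  have hβφ : 0 < γ + w * Δt := by positivity
  have h8φ : 8 * Δt * Dφ < (γ + w * Δt) * h ^ 2 := by
    rcases hcond1 with hcase | hcase
    · have hlt : 8 * Dφ < h ^ 2 * w := (div_lt_iff₀ hw).1 hcase
      nlinarith [mul_pos hγpos (pow_pos hhpos 2)]
    · have hd : 0 < 8 * Dφ - w * h ^ 2 := by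
        by_contra hnd
        push_neg at hnd
        have hnum : (0:ℝ) ≤ γ * h ^ 2 := by positivity
        have : γ * h ^ 2 / (8 * Dφ - w * h ^ 2) ≤ 0 :=
          div_nonpos_iff.2 (Or.inl ⟨hnum, hnd⟩)
        linarith
      have := (lt_div_iff₀ hd).1 hcase
      nlinarith
  have h8c : 8 * Δt * Dc < γ * h ^ 2 := by
    have := (lt_div_iff₀ (by positivity : (0:ℝ) < 8 * Dc)).1 hcond2
    nlinarith
  constructor
  · apply specRad_lt_one _ N (Δt * Dφ) (γ + w * Δt) _ hcφ hβφ hoff hrow hq0 hNinf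
    have hstep : Δt * Dφ * (8 / h ^ 2) < γ + w * Δt := by
      rw [show Δt * Dφ * (8 / h ^ 2) = 8 * Δt * Dφ / h ^ 2 by ring]
      exact (div_lt_iff₀ (by positivity)).2 h8φ
    calc Δt * Dφ * (4 * (1 / Δx ^ 2 + 1 / Δy ^ 2))
        ≤ Δt * Dφ * (8 / h ^ 2) := mul_le_mul_of_nonneg_left hfour hcφ.le
      _ < γ + w * Δt := hstep
  · apply specRad_lt_one _ N (Δt * Dc) γ _ hcc hγpos hoff hrow hq0 hNinf
    have hstep : Δt * Dc * (8 / h ^ 2) < γ := by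
      rw [show Δt * Dc * (8 / h ^ 2) = 8 * Δt * Dc / h ^ 2 by ring]
      exact (div_lt_iff₀ (by positivity)).2 h8c
    calc Δt * Dc * (4 * (1 / Δx ^ 2 + 1 / Δy ^ 2))
        ≤ Δt * Dc * (8 / h ^ 2) := mul_le_mul_of_nonneg_left hfour hcc.le
      _ < γ := hstep
end

section
/- Let N and T be n×n complex matrices with N·N = 0, and let β ∈ ℂ. Then the matrices β·N + T·N and T·N have the same spectrum; in particular their spectral radii coincide. -/
open Matrix Kronecker

lemma aux_det {n : ℕ} (hn : 0 < n) (N T : Matrix (Fin n) (Fin n) ℂ) (hN : N * N = 0) (β lam : ℂ) :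
    ((lam • 1 - (β • N + T * N)).det = 0 ↔ (lam • 1 - T * N).det = 0) := by
  rcases eq_or_ne lam 0 with rfl | hlam
  · simp only [zero_smul, zero_sub]
    constructor <;> intro _
    · have : -(T * N) = (-T) * N := by noncomm_ring
      rw [this, Matrix.det_mul]
      have h2 : N.det = 0 := by
        have := congrArg Matrix.det hN
        rw [Matrix.det_mul, @Matrix.det_zero _ _ _ _ _ ⟨⟨0, hn⟩⟩] at this
        exact pow_eq_zero_iff (n := 2) (by norm_num) |>.mp (by rw [sq]; exact this)
      simp [h2]
    · have : -(β • N + T * N) = (-(β • 1 + T)) * N := by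
        rw [neg_mul, add_mul, Matrix.smul_mul, one_mul]
      rw [this, Matrix.det_mul]
      have h2 : N.det = 0 := by
        have := congrArg Matrix.det hN
        rw [Matrix.det_mul, @Matrix.det_zero _ _ _ _ _ ⟨⟨0, hn⟩⟩] at this
        exact pow_eq_zero_iff (n := 2) (by norm_num) |>.mp (by rw [sq]; exact this)
      simp [h2]
  · have key : (lam • 1 - (β • N + T * N)) * (1 + (β / lam) • N) = lam • 1 - T * N := by
      have hTNN : T * N * ((β/lam) • N) = 0 := by
        rw [Matrix.mul_smul, Matrix.mul_assoc, hN, Matrix.mul_zero, smul_zero]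
      have h1 : (lam • (1 : Matrix (Fin n) (Fin n) ℂ)) * ((β/lam) • N) = β • N := by
        rw [Matrix.smul_mul, Matrix.one_mul, smul_smul, mul_div_cancel₀ _ hlam]
      have h2 : (β • N) * ((β/lam) • N) = 0 := by
        rw [Matrix.smul_mul, Matrix.mul_smul, hN, smul_zero, smul_zero]
      have expand : (lam • 1 - (β • N + T * N)) * (1 + (β / lam) • N)
          = lam • (1:Matrix (Fin n) (Fin n) ℂ) + lam • 1 * ((β/lam) • N) - (β • N + β • N * ((β/lam) • N)) - (T * N + T * N * ((β/lam) • N)) := by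
        noncomm_ring
        module
      rw [expand, h1, h2, hTNN]
      abel
    have hu : IsUnit (1 + (β / lam) • N) := by
      have hsq : ((β/lam) • N) * ((β/lam) • N) = 0 := by
        rw [Matrix.smul_mul, Matrix.mul_smul, hN, smul_zero, smul_zero]
      have e1 : ((1:Matrix (Fin n) (Fin n) ℂ) + (β / lam) • N) * (1 - (β / lam) • N) = 1 := by
        rw [add_mul, one_mul, mul_sub, mul_one, hsq]; abel
      have e2 : ((1:Matrix (Fin n) (Fin n) ℂ) - (β / lam) • N) * (1 + (β / lam) • N) = 1 := by
        rw [sub_mul, one_mul, mul_add, mul_one, hsq]; abel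
      exact ⟨⟨_, _, e1, e2⟩, rfl⟩
    have hdet : (1 + (β / lam) • N).det ≠ 0 := by
      intro h
      exact (by simp [Matrix.isUnit_iff_isUnit_det, h, isUnit_iff_ne_zero] : ¬ IsUnit (1 + (β / lam) • N)) hu
    have := congrArg Matrix.det key
    rw [Matrix.det_mul] at this
    constructor <;> intro h
    · rw [← this, h, zero_mul]
    · rcases mul_eq_zero.mp (this.trans h) with h' | h'
      · exact h'
      · exact absurd h' hdet

theorem stmt7 {n : ℕ} (N T : Matrix (Fin n) (Fin n) ℂ) (hN : N * N = 0) (β : ℂ) :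
    spectrum ℂ (β • N + T * N) = spectrum ℂ (T * N) ∧
      specRadC (β • N + T * N) = specRadC (T * N) := by
  have hspec : spectrum ℂ (β • N + T * N) = spectrum ℂ (T * N) := by
    rcases Nat.eq_zero_or_pos n with h0 | hn
    · subst h0
      exact congrArg _ (Subsingleton.elim _ _)
    · ext lam
      rw [spectrum.mem_iff, spectrum.mem_iff, Algebra.algebraMap_eq_smul_one,
          Matrix.isUnit_iff_isUnit_det, Matrix.isUnit_iff_isUnit_det,
          isUnit_iff_ne_zero, isUnit_iff_ne_zero]
      simp only [ne_eq, not_not]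
      exact aux_det hn N T hN β lam
  exact ⟨hspec, by unfold specRadC; rw [hspec]⟩
end

section
/- Let M be an n×n real symmetric negative semidefinite matrix, let α > 0 and β > 0, and set P = β·I − α·M. Then P is invertible and the spectral radius of β·P⁻¹ − I equals α·ρ(M)/(β + α·ρ(M)). -/
open Matrix Kronecker

private lemma stmt8_csSup_range {n : ℕ} (f : Fin n → ℝ) (i₀ : Fin n)
    (h : ∀ i, f i ≤ f i₀) : sSup (Set.range f) = f i₀ := by
  haveI : Nonempty (Fin n) := ⟨i₀⟩
  refine le_antisymm (csSup_le (Set.range_nonempty f) ?_) (le_csSup (Set.finite_range f).bddAbove ⟨i₀, rfl⟩)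
  rintro - ⟨i, rfl⟩; exact h i

theorem stmt8 {n : ℕ} (M : Matrix (Fin n) (Fin n) ℝ)
    (hsymm : M.IsSymm) (hnsd : (-M).PosSemidef)
    (α β : ℝ) (hα : 0 < α) (hβ : 0 < β)
    (P : Matrix (Fin n) (Fin n) ℝ) (hP : P = β • 1 - α • M) :
    IsUnit P ∧ specRad (β • P⁻¹ - 1) = α * specRad M / (β + α * specRad M) := by
  classical
  have hM : M.IsHermitian := by
    rwa [Matrix.IsHermitian, Matrix.conjTranspose_eq_transpose_of_trivial]
  set d : Fin n → ℝ := hM.eigenvalues with hd_def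
  -- eigenvalues are nonpositive
  have hd0 : ∀ i, d i ≤ 0 := by
    intro i
    have h1 := hM.eigenvalues_eq i
    rw [hd_def, h1]
    have h2 := hnsd.dotProduct_mulVec_nonneg ((hM.eigenvectorBasis i).ofLp)
    simp only [Matrix.neg_mulVec, dotProduct_neg] at h2
    simp only [RCLike.re_to_real]
    linarith
  set V : Matrix (Fin n) (Fin n) ℝ := (hM.eigenvectorUnitary : Matrix (Fin n) (Fin n) ℝ) with hV_def
  have hV1 : V * star V = 1 := (Matrix.mem_unitaryGroup_iff).mp hM.eigenvectorUnitary.2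
  have hV2 : star V * V = 1 := (Matrix.mem_unitaryGroup_iff').mp hM.eigenvectorUnitary.2
  have hMdiag : M = V * Matrix.diagonal d * star V := by
    have := hM.spectral_theorem
    rwa [RCLike.ofReal_real_eq_id, Function.id_comp] at this
  set D : Fin n → ℝ := fun i => β - α * d i with hD_def
  have hDpos : ∀ i, 0 < D i := by
    intro i
    have := hd0 i
    have : 0 ≤ α * (-(d i)) := mul_nonneg hα.le (by linarith)
    simp only [hD_def]
    nlinarith
  have hconj : ∀ (E : Fin n → ℝ), V * Matrix.diagonal E * star V *
      (V * Matrix.diagonal (fun i => (E i)⁻¹) * star V) = V * Matrix.diagonal (fun i => E i * (E i)⁻¹) * star V := by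
    intro E
    calc V * Matrix.diagonal E * star V * (V * Matrix.diagonal (fun i => (E i)⁻¹) * star V)
        = V * Matrix.diagonal E * (star V * V) * Matrix.diagonal (fun i => (E i)⁻¹) * star V := by
          simp only [Matrix.mul_assoc]
      _ = V * (Matrix.diagonal E * Matrix.diagonal (fun i => (E i)⁻¹)) * star V := by
          rw [hV2, Matrix.mul_one]; simp only [Matrix.mul_assoc]
      _ = V * Matrix.diagonal (fun i => E i * (E i)⁻¹) * star V := by
          rw [Matrix.diagonal_mul_diagonal]
  have hPdiag : P = V * Matrix.diagonal D * star V := by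
    have hdiagD : Matrix.diagonal D = β • (1 : Matrix (Fin n) (Fin n) ℝ) - α • Matrix.diagonal d := by
      ext i j
      by_cases h : i = j
      · subst h; simp [Matrix.diagonal_apply_eq, hD_def]
      · simp [Matrix.diagonal_apply_ne _ h, Matrix.one_apply_ne h]
    rw [hP]
    calc β • (1 : Matrix (Fin n) (Fin n) ℝ) - α • M
        = β • (V * 1 * star V) - α • (V * Matrix.diagonal d * star V) := by
          rw [Matrix.mul_one, hV1, ← hMdiag]
      _ = V * (β • (1:Matrix (Fin n) (Fin n) ℝ)) * star V - V * (α • Matrix.diagonal d) * star V := by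
          rw [Matrix.mul_smul, Matrix.mul_smul, Matrix.smul_mul, Matrix.smul_mul]
      _ = V * (β • (1:Matrix (Fin n) (Fin n) ℝ) - α • Matrix.diagonal d) * star V := by
          rw [← Matrix.sub_mul, ← Matrix.mul_sub]
      _ = V * Matrix.diagonal D * star V := by rw [← hdiagD]
  have hPmul : P * (V * Matrix.diagonal (fun i => (D i)⁻¹) * star V) = 1 := by
    rw [hPdiag, hconj]
    have : (fun i => D i * (D i)⁻¹) = fun _ => (1:ℝ) := by
      funext i; exact mul_inv_cancel₀ (hDpos i).ne'
    rw [this, Matrix.diagonal_one, Matrix.mul_one, hV1]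
  have hPunit : IsUnit P := ⟨⟨P, _, hPmul, mul_eq_one_comm.mp hPmul⟩, rfl⟩
  have hPinv : P⁻¹ = V * Matrix.diagonal (fun i => (D i)⁻¹) * star V :=
    Matrix.inv_eq_right_inv hPmul
  -- the matrix Q
  have hmid : β • Matrix.diagonal (fun i => (D i)⁻¹) - 1
      = Matrix.diagonal (fun i => α * d i / (β - α * d i)) := by
    ext i j
    rcases eq_or_ne i j with rfl | h
    · have hne : β - α * d i ≠ 0 := (hDpos i).ne'
      simp only [Matrix.sub_apply, Matrix.smul_apply, Matrix.diagonal_apply_eq,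
        Matrix.one_apply_eq, smul_eq_mul, hD_def]
      field_simp
      ring
    · simp [Matrix.diagonal_apply_ne _ h, Matrix.one_apply_ne h]
  have hQdiag : β • P⁻¹ - 1 = V * Matrix.diagonal (fun i => α * d i / (β - α * d i)) * star V := by
    rw [hPinv]
    calc β • (V * Matrix.diagonal (fun i => (D i)⁻¹) * star V) - 1
        = V * (β • Matrix.diagonal (fun i => (D i)⁻¹)) * star V - V * 1 * star V := by
          rw [Matrix.mul_one, hV1, Matrix.mul_smul, Matrix.smul_mul]
      _ = V * (β • Matrix.diagonal (fun i => (D i)⁻¹) - 1) * star V := by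
          rw [← Matrix.sub_mul, ← Matrix.mul_sub]
      _ = V * Matrix.diagonal (fun i => α * d i / (β - α * d i)) * star V := by rw [hmid]
  -- move to ℂ
  have φmul : ∀ (A B : Matrix (Fin n) (Fin n) ℝ),
      (A * B).map Complex.ofReal = A.map Complex.ofReal * B.map Complex.ofReal := by
    intro A B
    exact Matrix.map_mul (f := Complex.ofRealHom)
  have φone : (1 : Matrix (Fin n) (Fin n) ℝ).map Complex.ofReal = 1 :=
    Matrix.map_one _ (map_zero Complex.ofRealHom) (map_one Complex.ofRealHom)
  have φstar : (star V).map Complex.ofReal = star (V.map Complex.ofReal) := by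
    ext i j
    simp [Matrix.map_apply, Matrix.star_apply, Complex.conj_ofReal]
  have φdiag : ∀ (E : Fin n → ℝ), (Matrix.diagonal E).map Complex.ofReal
      = Matrix.diagonal (fun i => (E i : ℂ)) := fun E =>
    Matrix.diagonal_map (map_zero Complex.ofRealHom)
  set Vc : Matrix (Fin n) (Fin n) ℂ := V.map Complex.ofReal with hVc_def
  have hVc1 : Vc * star Vc = 1 := by
    rw [hVc_def, ← φstar, ← φmul, hV1, φone]
  have hVc2 : star Vc * Vc = 1 := by
    rw [hVc_def, ← φstar, ← φmul, hV2, φone]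
  set u : (Matrix (Fin n) (Fin n) ℂ)ˣ := ⟨Vc, star Vc, hVc1, hVc2⟩ with hu_def
  have hspec : ∀ (E : Fin n → ℝ) (A : Matrix (Fin n) (Fin n) ℝ),
      A = V * Matrix.diagonal E * star V →
      spectrum ℂ (A.map Complex.ofReal) = Set.range (fun i => (E i : ℂ)) := by
    intro E A hA
    rw [hA, φmul, φmul, φstar, φdiag]
    have : Vc * Matrix.diagonal (fun i => (E i : ℂ)) * star Vc
        = (u : Matrix (Fin n) (Fin n) ℂ) * Matrix.diagonal (fun i => (E i : ℂ)) * ((u⁻¹ : _ˣ) : Matrix (Fin n) (Fin n) ℂ) := rfl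
    rw [this, spectrum.units_conjugate, spectrum_diagonal]
  have hspecM := hspec d M hMdiag
  have hspecQ := hspec (fun i => α * d i / (β - α * d i)) _ hQdiag
  -- compute specRad M
  have habs : ∀ (g : Fin n → ℝ), (fun z : ℂ => ‖z‖) '' Set.range (fun i => (g i : ℂ)) = Set.range (fun i => |g i|) := by
    intro g
    rw [← Set.range_comp]
    exact congrArg Set.range (funext fun i => by
      simp [Function.comp, Complex.norm_real])
  have hRadM : specRad M = sSup (Set.range (fun i => |d i|)) := by
    rw [specRad, hspecM, habs]
  have hRadQ : specRad (β • P⁻¹ - 1) = sSup (Set.range (fun i => α * (-(d i)) / (β + α * (-(d i))))) := by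
    rw [specRad, hspecQ, habs]
    congr 1
    refine congrArg Set.range (funext fun i => ?_)
    have h1 : β - α * d i = β + α * (-(d i)) := by ring
    have h2 : (0:ℝ) < β - α * d i := hDpos i
    rw [abs_div, abs_of_pos h2, abs_mul, abs_of_pos hα, abs_of_nonpos (hd0 i), h1]
  have habsd : ∀ i, |d i| = -(d i) := fun i => abs_of_nonpos (hd0 i)
  rcases Nat.eq_zero_or_pos n with hn | hn
  · subst hn
    refine ⟨hPunit, ?_⟩
    have he : ∀ (g : Fin 0 → ℝ), Set.range g = (∅ : Set ℝ) := fun g => Set.range_eq_empty g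
    rw [hRadM, hRadQ, he, he, Real.sSup_empty]
    simp
  · have : Nonempty (Fin n) := ⟨⟨0, hn⟩⟩
    obtain ⟨i₀, hi₀⟩ := Finite.exists_max (fun i => -(d i))
    have hmono : ∀ s t : ℝ, 0 ≤ s → s ≤ t → α * s / (β + α * s) ≤ α * t / (β + α * t) := by
      intro s t hs hst
      have hs' : 0 ≤ α * s := mul_nonneg hα.le hs
      have ht' : 0 ≤ α * t := mul_nonneg hα.le (hs.trans hst)
      have h1 : (0:ℝ) < β + α * s := by linarith
      have h2 : (0:ℝ) < β + α * t := by linarith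
      rw [div_le_div_iff₀ h1 h2]
      have key : α * β * s ≤ α * β * t := mul_le_mul_of_nonneg_left hst (by positivity)
      nlinarith [key]
    have hd0' : 0 ≤ -(d i₀) := by linarith [hd0 i₀]
    have hRadM' : specRad M = -(d i₀) := by
      rw [hRadM]
      rw [stmt8_csSup_range (fun i => |d i|) i₀ (fun i => by show |d i| ≤ |d i₀|; rw [habsd i, habsd i₀]; exact hi₀ i)]
      exact habsd i₀
    have hRadQ' : specRad (β • P⁻¹ - 1) = α * (-(d i₀)) / (β + α * (-(d i₀))) := by
      rw [hRadQ]
      exact stmt8_csSup_range _ i₀ (fun i => hmono _ _ (by linarith [hd0 i]) (hi₀ i))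
    exact ⟨hPunit, by rw [hRadQ', hRadM']⟩
end

section
/- Let m_x, m_y ≥ 1, Δx, Δy > 0, let M be the Dirichlet Kronecker-sum Laplacian of sizes (m_x, m_y) and steps (Δx, Δy), let α > 0, β > 0, and set P = β·I − α·M. Let N be a real matrix of the same size with N·N = 0. Then the spectral radius of Σ = −α·P⁻¹·N satisfies ρ(Σ) ≤ α²·ρ(M)·√(‖N‖₁·‖N‖_∞) / (β² + α·β·ρ(M)). -/
open Matrix Kronecker

variable {n : Type*} [Fintype n] [DecidableEq n]


lemma mem_spec_iff (A : Matrix n n ℂ) (z : ℂ) :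
    z ∈ spectrum ℂ A ↔ ∃ v, v ≠ 0 ∧ A.mulVec v = z • v := by
  rw [spectrum.mem_iff, Matrix.isUnit_iff_isUnit_det, isUnit_iff_ne_zero, not_ne_iff,
    ← Matrix.exists_mulVec_eq_zero_iff]
  have key : ∀ v : n → ℂ, (algebraMap ℂ (Matrix n n ℂ) z - A).mulVec v = z • v - A.mulVec v := by
    intro v
    rw [Matrix.sub_mulVec]
    congr 1
    rw [Matrix.algebraMap_eq_diagonal]
    funext i
    simp [Matrix.mulVec_diagonal]
  constructor
  · rintro ⟨v, hv, h⟩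
    rw [key] at h
    exact ⟨v, hv, (sub_eq_zero.mp h).symm⟩
  · rintro ⟨v, hv, h⟩
    exact ⟨v, hv, by rw [key, h, sub_self]⟩

lemma spec_clm (A : Matrix n n ℂ) :
    spectrum ℂ (Matrix.toEuclideanCLM (𝕜 := ℂ) A) = spectrum ℂ A :=
  AlgEquiv.spectrum_eq (Matrix.toEuclideanCLM (𝕜 := ℂ) (n := n)) A

lemma spec_abs_le_norm [Nonempty n] (A : Matrix n n ℂ) {z : ℂ} (hz : z ∈ spectrum ℂ A) :
    ‖z‖ ≤ ‖Matrix.toEuclideanCLM (𝕜 := ℂ) A‖ := by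
  rw [← spec_clm] at hz
  simpa using spectrum.norm_le_norm_of_mem hz

lemma spec_bdd [Nonempty n] (A : Matrix n n ℂ) : BddAbove ((fun z : ℂ => ‖z‖) '' spectrum ℂ A) := by
  refine ⟨‖Matrix.toEuclideanCLM (𝕜 := ℂ) A‖, ?_⟩
  rintro x ⟨z, hz, rfl⟩
  exact spec_abs_le_norm A hz

lemma isSelfAdjoint_clm {A : Matrix n n ℂ} (hA : A.IsHermitian) :
    _root_.IsSelfAdjoint (Matrix.toEuclideanCLM (𝕜 := ℂ) A) := by
  refine isSelfAdjoint_iff.2 ?_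
  have h1 : star A = A := by rw [Matrix.star_eq_conjTranspose, hA]
  rw [← map_star, h1]

lemma herm_spec_real [Nonempty n] {A : Matrix n n ℂ} (hA : A.IsHermitian) {z : ℂ}
    (hz : z ∈ spectrum ℂ A) : z = (z.re : ℂ) := by
  rw [← spec_clm] at hz
  exact (isSelfAdjoint_clm hA).mem_spectrum_eq_re hz

lemma herm_norm_le [Nonempty n] {A : Matrix n n ℂ} (hA : A.IsHermitian) {r : ℝ} (hr : 0 ≤ r)
    (h : ∀ z ∈ spectrum ℂ A, ‖z‖ ≤ r) :
    ‖Matrix.toEuclideanCLM (𝕜 := ℂ) A‖ ≤ r := by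
  have hsa := isSelfAdjoint_clm hA
  have h1 : spectralRadius ℂ (Matrix.toEuclideanCLM (𝕜 := ℂ) A) ≤ ENNReal.ofReal r := by
    rw [spectralRadius]
    refine iSup₂_le fun z hz => ?_
    rw [spec_clm] at hz
    rw [show ((‖z‖₊ : NNReal) : ENNReal) = ENNReal.ofReal ‖z‖ from (ofReal_norm z).symm]
    exact ENNReal.ofReal_le_ofReal (by simpa using h z hz)
  rw [hsa.spectralRadius_eq_nnnorm] at h1
  have := ENNReal.toReal_mono ENNReal.ofReal_ne_top h1
  simpa [ENNReal.toReal_ofReal hr] using this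

lemma spec_gersh (A : Matrix n n ℂ) {z : ℂ} (hz : z ∈ spectrum ℂ A) :
    ∃ i, ‖z - A i i‖ ≤ ∑ j ∈ Finset.univ.erase i, ‖A i j‖ := by
  obtain ⟨v, hv, hAv⟩ := (mem_spec_iff A z).1 hz
  obtain ⟨i0, hi0⟩ := Function.ne_iff.1 hv
  haveI : Nonempty n := ⟨i0⟩
  obtain ⟨i, -, hi⟩ := Finset.exists_max_image Finset.univ (fun i => ‖v i‖)
    ⟨i0, Finset.mem_univ i0⟩
  have hvi : 0 < ‖v i‖ :=
    lt_of_lt_of_le (norm_pos_iff.mpr hi0) (hi i0 (Finset.mem_univ i0))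
  refine ⟨i, ?_⟩
  have h2 : ∑ j, A i j * v j = z * v i := by
    have := congrFun hAv i
    simpa [Matrix.mulVec, dotProduct] using this
  rw [← Finset.add_sum_erase _ _ (Finset.mem_univ i)] at h2
  have h1 : (z - A i i) * v i = ∑ j ∈ Finset.univ.erase i, A i j * v j := by
    linear_combination -h2
  have h3 : ‖(z - A i i) * v i‖ ≤
      (∑ j ∈ Finset.univ.erase i, ‖A i j‖) * ‖v i‖ := by
    rw [h1, Finset.sum_mul]
    refine (norm_sum_le _ _).trans (Finset.sum_le_sum fun j _ => ?_)
    rw [norm_mul]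
    exact mul_le_mul_of_nonneg_left (hi j (Finset.mem_univ j)) (norm_nonneg _)
  rw [norm_mul] at h3
  exact le_of_mul_le_mul_right h3 hvi

lemma spec_rowsum (A : Matrix n n ℂ) {z : ℂ} (hz : z ∈ spectrum ℂ A) :
    ∃ i, ‖z‖ ≤ ∑ j, ‖A i j‖ := by
  obtain ⟨i, hi⟩ := spec_gersh A hz
  refine ⟨i, ?_⟩
  rw [← Finset.add_sum_erase _ _ (Finset.mem_univ i)]
  calc ‖z‖ ≤ ‖A i i‖ + ‖z - A i i‖ := by
        have := norm_add_le (A i i) (z - A i i); simpa using this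
    _ ≤ _ := by linarith

lemma dirLap_symm (m : ℕ) (Δ : ℝ) (i j : Fin m) : dirLap m Δ j i = dirLap m Δ i j := by
  rcases eq_or_ne i j with rfl | h
  · rfl
  · unfold dirLap
    simp only [Matrix.of_apply]
    rw [if_neg (Ne.symm h), if_neg h]
    exact if_congr or_comm rfl rfl

lemma dirLap_offdiag_s9 {m : ℕ} (Δ : ℝ) {i j : Fin m} (h : i ≠ j) :
    dirLap m Δ i j = if (i : ℕ) + 1 = (j : ℕ) ∨ (j : ℕ) + 1 = (i : ℕ) then 1 / Δ ^ 2 else 0 := by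
  unfold dirLap
  simp only [Matrix.of_apply, if_neg h]

lemma kron_entry (mx my : ℕ) (Δx Δy : ℝ) (p q : Fin my × Fin mx) :
    kronLapD mx my Δx Δy p q =
      (if p.1 = q.1 then 1 else 0) * dirLap mx Δx p.2 q.2 +
        dirLap my Δy p.1 q.1 * (if p.2 = q.2 then 1 else 0) := by
  unfold kronLapD
  simp [Matrix.kroneckerMap_apply, Matrix.one_apply]

lemma ite_eq_swap {A : Type*} [DecidableEq A] (a b : A) (c : ℝ) :
    (if a = b then c else 0) = (if b = a then c else 0) := by
  by_cases h : a = b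
  · rw [if_pos h, if_pos h.symm]
  · rw [if_neg h, if_neg (Ne.symm h)]

lemma kron_symm (mx my : ℕ) (Δx Δy : ℝ) (p q : Fin my × Fin mx) :
    kronLapD mx my Δx Δy q p = kronLapD mx my Δx Δy p q := by
  rw [kron_entry, kron_entry, dirLap_symm mx Δx p.2 q.2, dirLap_symm my Δy p.1 q.1,
    ite_eq_swap q.1 p.1, ite_eq_swap q.2 p.2]

lemma kron_diag (mx my : ℕ) (Δx Δy : ℝ) (p : Fin my × Fin mx) :
    kronLapD mx my Δx Δy p p = -(2 / Δx ^ 2 + 2 / Δy ^ 2) := by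
  rw [kron_entry]
  simp [dirLap]
  ring

lemma sum_ite_le {m : ℕ} (Q : Fin m → Prop) [DecidablePred Q]
    (hQ : ∀ a b, Q a → Q b → a = b) {c : ℝ} (hc : 0 ≤ c) :
    ∑ j : Fin m, (if Q j then c else 0) ≤ c := by
  rw [← Finset.sum_filter, Finset.sum_const]
  have hcard : (Finset.univ.filter Q).card ≤ 1 :=
    Finset.card_le_one.2 fun a ha b hb =>
      hQ a b (Finset.mem_filter.1 ha).2 (Finset.mem_filter.1 hb).2
  calc ((Finset.univ.filter Q).card : ℕ) • c = ((Finset.univ.filter Q).card : ℝ) * c := by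
        rw [nsmul_eq_mul]
    _ ≤ 1 * c := mul_le_mul_of_nonneg_right (by exact_mod_cast hcard) hc
    _ = c := one_mul c

lemma adj_sum_le {m : ℕ} (k : Fin m) {c : ℝ} (hc : 0 ≤ c) :
    ∑ b : Fin m, (if (k:ℕ)+1 = (b:ℕ) ∨ (b:ℕ)+1 = (k:ℕ) then c else 0) ≤ 2 * c := by
  have key : ∀ b : Fin m, (if (k:ℕ)+1 = (b:ℕ) ∨ (b:ℕ)+1 = (k:ℕ) then c else 0) ≤
      (if (k:ℕ)+1 = (b:ℕ) then c else 0) + (if (b:ℕ)+1 = (k:ℕ) then c else 0) := by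
    intro b
    split_ifs <;> simp_all <;> linarith
  calc _ ≤ ∑ b : Fin m, ((if (k:ℕ)+1 = (b:ℕ) then c else 0) + (if (b:ℕ)+1 = (k:ℕ) then c else 0)) :=
        Finset.sum_le_sum fun b _ => key b
    _ = (∑ b : Fin m, (if (k:ℕ)+1 = (b:ℕ) then c else 0)) +
        ∑ b : Fin m, (if (b:ℕ)+1 = (k:ℕ) then c else 0) := Finset.sum_add_distrib
    _ ≤ c + c := add_le_add
        (sum_ite_le _ (fun a b ha hb => Fin.ext (by omega)) hc)
        (sum_ite_le _ (fun a b ha hb => Fin.ext (by omega)) hc)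
    _ = 2 * c := by ring

lemma sum_prod_ite_left {A B : Type*} [Fintype A] [Fintype B] [DecidableEq A] (a0 : A)
    (Q : B → Prop) [DecidablePred Q] (c : ℝ) :
    ∑ q : A × B, (if q.1 = a0 ∧ Q q.2 then c else 0) = ∑ b, (if Q b then c else 0) := by
  rw [Fintype.sum_prod_type]
  have h : ∀ a : A, (∑ b, if a = a0 ∧ Q b then c else 0) =
      if a = a0 then (∑ b, if Q b then c else 0) else 0 := fun a => by
    by_cases h : a = a0 <;> simp [h]
  rw [Finset.sum_congr rfl fun a _ => h a, Finset.sum_ite_eq' Finset.univ a0]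
  simp

lemma sum_prod_ite_right {A B : Type*} [Fintype A] [Fintype B] [DecidableEq B] (b0 : B)
    (Q : A → Prop) [DecidablePred Q] (c : ℝ) :
    ∑ q : A × B, (if q.2 = b0 ∧ Q q.1 then c else 0) = ∑ a, (if Q a then c else 0) := by
  rw [Fintype.sum_prod_type_right]
  have h : ∀ b : B, (∑ a, if b = b0 ∧ Q a then c else 0) =
      if b = b0 then (∑ a, if Q a then c else 0) else 0 := fun b => by
    by_cases h : b = b0 <;> simp [h]
  rw [Finset.sum_congr rfl fun b _ => h b, Finset.sum_ite_eq' Finset.univ b0]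
  simp

lemma kron_rowsum_s9 (mx my : ℕ) {Δx Δy : ℝ} (hΔx : 0 < Δx) (hΔy : 0 < Δy)
    (p : Fin my × Fin mx) :
    ∑ q ∈ Finset.univ.erase p, |kronLapD mx my Δx Δy p q| ≤ 2 / Δx ^ 2 + 2 / Δy ^ 2 := by
  have hx2 : (0:ℝ) ≤ 1 / Δx ^ 2 := by positivity
  have hy2 : (0:ℝ) ≤ 1 / Δy ^ 2 := by positivity
  set g : Fin my × Fin mx → ℝ := fun q =>
    (if q.1 = p.1 ∧ ((p.2 : ℕ) + 1 = (q.2 : ℕ) ∨ (q.2 : ℕ) + 1 = (p.2 : ℕ)) then 1 / Δx ^ 2 else 0) +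
    (if q.2 = p.2 ∧ ((p.1 : ℕ) + 1 = (q.1 : ℕ) ∨ (q.1 : ℕ) + 1 = (p.1 : ℕ)) then 1 / Δy ^ 2 else 0)
    with hg
  have hgnn : ∀ q, 0 ≤ g q := by
    intro q; rw [hg]; dsimp only
    apply add_nonneg <;> (split_ifs <;> positivity)
  have step1 : ∀ q ∈ Finset.univ.erase p, |kronLapD mx my Δx Δy p q| ≤ g q := by
    intro q hq
    have hqp : q ≠ p := (Finset.mem_erase.1 hq).1
    rw [kron_entry, hg]
    dsimp only
    by_cases h1 : p.1 = q.1
    · have h2 : p.2 ≠ q.2 := fun h2 => hqp (Prod.ext h1.symm h2.symm)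
      rw [if_pos h1, if_neg h2, one_mul, mul_zero, add_zero, dirLap_offdiag_s9 Δx h2,
        if_neg (fun hc : q.2 = p.2 ∧ _ => h2 hc.1.symm)]
      by_cases ha : (p.2:ℕ) + 1 = (q.2:ℕ) ∨ (q.2:ℕ) + 1 = (p.2:ℕ)
      · rw [if_pos ha, if_pos ⟨h1.symm, ha⟩, add_zero, abs_of_nonneg hx2]
      · rw [if_neg ha, if_neg (fun hc => ha hc.2), abs_zero, add_zero]
    · rw [if_neg h1, zero_mul, zero_add, if_neg (fun hc : q.1 = p.1 ∧ _ => h1 hc.1.symm)]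
      by_cases h2 : p.2 = q.2
      · rw [if_pos h2, mul_one, dirLap_offdiag_s9 Δy (fun hh => h1 hh), zero_add]
        by_cases ha : (p.1:ℕ) + 1 = (q.1:ℕ) ∨ (q.1:ℕ) + 1 = (p.1:ℕ)
        · rw [if_pos ha, if_pos ⟨h2.symm, ha⟩, abs_of_nonneg hy2]
        · rw [if_neg ha, if_neg (fun hc => ha hc.2), abs_zero]
      · rw [if_neg h2, mul_zero, abs_zero, zero_add]
        split_ifs <;> positivity
  calc ∑ q ∈ Finset.univ.erase p, |kronLapD mx my Δx Δy p q| ≤ ∑ q ∈ Finset.univ.erase p, g q :=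
        Finset.sum_le_sum step1
    _ ≤ ∑ q, g q := Finset.sum_le_sum_of_subset_of_nonneg (Finset.subset_univ _)
        (fun q _ _ => hgnn q)
    _ = (∑ b : Fin mx, (if (p.2:ℕ) + 1 = (b:ℕ) ∨ (b:ℕ) + 1 = (p.2:ℕ) then 1 / Δx ^ 2 else 0)) +
        ∑ a : Fin my, (if (p.1:ℕ) + 1 = (a:ℕ) ∨ (a:ℕ) + 1 = (p.1:ℕ) then 1 / Δy ^ 2 else 0) := by
        rw [hg, Finset.sum_add_distrib]
        exact congrArg₂ (· + ·)
          (sum_prod_ite_left p.1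
            (fun b : Fin mx => (p.2:ℕ)+1 = (b:ℕ) ∨ (b:ℕ)+1 = (p.2:ℕ)) (1/Δx^2))
          (sum_prod_ite_right p.2
            (fun a : Fin my => (p.1:ℕ)+1 = (a:ℕ) ∨ (a:ℕ)+1 = (p.1:ℕ)) (1/Δy^2))
    _ ≤ 2 * (1 / Δx ^ 2) + 2 * (1 / Δy ^ 2) := add_le_add (adj_sum_le _ hx2) (adj_sum_le _ hy2)
    _ = 2 / Δx ^ 2 + 2 / Δy ^ 2 := by ring

lemma real_symm_herm {A : Matrix n n ℝ} (h : ∀ p q, A q p = A p q) :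
    (A.map Complex.ofReal).IsHermitian := by
  unfold Matrix.IsHermitian
  ext p q
  simp [Matrix.conjTranspose_apply, Matrix.map_apply, h p q]

set_option maxHeartbeats 1600000 in
theorem stmt9 (mx my : ℕ) (hmx : 1 ≤ mx) (hmy : 1 ≤ my)
    (Δx Δy : ℝ) (hΔx : 0 < Δx) (hΔy : 0 < Δy)
    (α β : ℝ) (hα : 0 < α) (hβ : 0 < β)
    (M P N : Matrix (Fin my × Fin mx) (Fin my × Fin mx) ℝ)
    (hM : M = kronLapD mx my Δx Δy)
    (hP : P = β • 1 - α • M)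
    (hNnil : N * N = 0) :
    specRad ((-α) • (P⁻¹ * N)) ≤
      α ^ 2 * specRad M * Real.sqrt (norm1 N * normInf N) /
        (β ^ 2 + α * β * specRad M) := by
  haveI : Nonempty (Fin mx) := Fin.pos_iff_nonempty.mp hmx
  haveI : Nonempty (Fin my) := Fin.pos_iff_nonempty.mp hmy
  set Mc := M.map Complex.ofReal with hMcdef
  set Nc := N.map Complex.ofReal with hNcdef
  set Pc := P.map Complex.ofReal with hPcdef
  have hMsymm : ∀ p q, M q p = M p q := fun p q => by rw [hM]; exact kron_symm mx my Δx Δy p q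
  have hMcHerm : Mc.IsHermitian := real_symm_herm hMsymm
  have hPc : Pc = (β:ℂ) • 1 - (α:ℂ) • Mc := by
    rw [hPcdef, hP, hMcdef]
    ext p q
    by_cases h : p = q <;>
      simp [Matrix.map_apply, Matrix.sub_apply, Matrix.smul_apply, Matrix.one_apply, h]
  have hreal : ∀ z ∈ spectrum ℂ Mc, ∃ x : ℝ, x ≤ 0 ∧ z = (x:ℂ) := by
    intro z hz
    refine ⟨z.re, ?_, herm_spec_real hMcHerm hz⟩
    obtain ⟨i, hger⟩ := spec_gersh Mc hz
    set s : ℝ := 2 / Δx ^ 2 + 2 / Δy ^ 2 with hs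
    have hdiag : Mc i i = ((-s : ℝ) : ℂ) := by
      rw [hMcdef, Matrix.map_apply, hM, kron_diag]
    have hrow : ∑ j ∈ Finset.univ.erase i, ‖Mc i j‖ ≤ s := by
      calc ∑ j ∈ Finset.univ.erase i, ‖Mc i j‖
          = ∑ j ∈ Finset.univ.erase i, |M i j| := by
            refine Finset.sum_congr rfl fun j _ => ?_
            rw [hMcdef, Matrix.map_apply, Complex.norm_real, Real.norm_eq_abs]
        _ ≤ s := by
            rw [hs]
            have := kron_rowsum_s9 mx my hΔx hΔy i
            refine le_trans (le_of_eq (Finset.sum_congr rfl fun j _ => by rw [hM])) this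
    have h1 : ‖z + (s:ℂ)‖ ≤ s := by
      have he : z - Mc i i = z + (s:ℂ) := by rw [hdiag]; push_cast; ring
      rw [he] at hger
      exact hger.trans hrow
    have h2 := Complex.re_le_norm (z + (s:ℂ))
    rw [Complex.add_re, Complex.ofReal_re] at h2
    linarith
  -- spectral radius facts for M
  have hρnn : 0 ≤ specRad M := by
    unfold specRad
    exact Real.sSup_nonneg fun x hx => by
      obtain ⟨z, -, rfl⟩ := hx; exact norm_nonneg z
  have habsρ : ∀ z ∈ spectrum ℂ Mc, ‖z‖ ≤ specRad M := by
    intro z hz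
    unfold specRad
    exact le_csSup (spec_bdd Mc) ⟨z, hz, rfl⟩
  have hβρ : 0 < β + α * specRad M := by nlinarith
  -- invertibility of P
  have hPdet : IsUnit P.det := by
    rw [isUnit_iff_ne_zero]
    intro h0
    have hdetc : Pc.det = Complex.ofReal P.det := (RingHom.map_det Complex.ofRealHom P).symm
    have hdet0 : Pc.det = 0 := by rw [hdetc, h0, Complex.ofReal_zero]
    obtain ⟨v, hv, hPv⟩ := (Matrix.exists_mulVec_eq_zero_iff).2 hdet0
    have ha0 : (α:ℂ) ≠ 0 := Complex.ofReal_ne_zero.mpr hα.ne'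
    rw [hPc, Matrix.sub_mulVec, Matrix.smul_mulVec, Matrix.smul_mulVec,
      Matrix.one_mulVec, sub_eq_zero] at hPv
    have hMv : Mc.mulVec v = ((β/α : ℝ):ℂ) • v := by
      have h1 := congrArg (fun w => ((α:ℂ))⁻¹ • w) hPv.symm
      simp only [smul_smul, inv_mul_cancel₀ ha0, one_smul] at h1
      rw [h1]
      congr 1
      push_cast
      ring
    obtain ⟨x, hx0, hxe⟩ := hreal _ ((mem_spec_iff Mc _).2 ⟨v, hv, hMv⟩)
    have hx : (β/α : ℝ) = x := by exact_mod_cast hxe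
    have : 0 < β/α := div_pos hβ hα
    linarith
  have hPcu : IsUnit Pc.det := by
    have hdetc : Pc.det = Complex.ofReal P.det := (RingHom.map_det Complex.ofRealHom P).symm
    rw [hdetc, isUnit_iff_ne_zero, Ne, Complex.ofReal_eq_zero]
    exact isUnit_iff_ne_zero.mp hPdet
  have hPr := Matrix.mul_nonsing_inv Pc hPcu
  have hPl := Matrix.nonsing_inv_mul Pc hPcu
  have hPinv : (P⁻¹).map Complex.ofReal = Pc⁻¹ := by
    refine (Matrix.inv_eq_right_inv ?_).symm
    have h1 : Pc * (P⁻¹).map Complex.ofReal = (P * P⁻¹).map Complex.ofRealHom :=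
      (Matrix.map_mul (f := Complex.ofRealHom)).symm
    rw [h1, Matrix.mul_nonsing_inv P hPdet]
    exact Matrix.map_one _ Complex.ofReal_zero Complex.ofReal_one
  -- hermitian structure
  have hPcHerm : Pc.IsHermitian := by
    refine real_symm_herm fun p q => ?_
    rw [hP]
    by_cases h : p = q
    · rw [h]
    · simp [Matrix.sub_apply, Matrix.smul_apply, Matrix.one_apply, h, Ne.symm h, hMsymm p q]
  have hPinvHerm : (Pc⁻¹).IsHermitian := hPcHerm.inv
  have hcomm : Pc⁻¹ * Mc = Mc * Pc⁻¹ := by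
    have h1 : Pc * Mc = Mc * Pc := by
      rw [hPc]
      simp only [Matrix.sub_mul, Matrix.mul_sub, Matrix.smul_mul, Matrix.mul_smul,
        Matrix.one_mul, Matrix.mul_one]
    calc Pc⁻¹ * Mc = Pc⁻¹ * Mc * (Pc * Pc⁻¹) := by rw [hPr, Matrix.mul_one]
      _ = Pc⁻¹ * (Mc * Pc) * Pc⁻¹ := by simp only [Matrix.mul_assoc]
      _ = Pc⁻¹ * (Pc * Mc) * Pc⁻¹ := by rw [h1]
      _ = Pc⁻¹ * Pc * (Mc * Pc⁻¹) := by simp only [Matrix.mul_assoc]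
      _ = Mc * Pc⁻¹ := by rw [hPl, Matrix.one_mul]
  have hMPHerm : (Mc * Pc⁻¹).IsHermitian := by
    rw [Matrix.IsHermitian, Matrix.conjTranspose_mul, hPinvHerm.eq, hMcHerm.eq, hcomm]
  -- norm bound for Mc * Pc⁻¹
  have hMPnorm : ‖Matrix.toEuclideanCLM (𝕜 := ℂ) (Mc * Pc⁻¹)‖ ≤
      specRad M / (β + α * specRad M) := by
    refine herm_norm_le hMPHerm (div_nonneg hρnn hβρ.le) ?_
    intro z hz
    obtain ⟨v, hv, hvz⟩ := (mem_spec_iff _ _).1 hz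
    set u := Pc⁻¹.mulVec v with hu
    have hvu : Pc.mulVec u = v := by
      rw [hu, Matrix.mulVec_mulVec, hPr, Matrix.one_mulVec]
    have hu0 : u ≠ 0 := fun h => hv (by rw [← hvu, h, Matrix.mulVec_zero])
    have h5 : Mc.mulVec u = z • v := by rw [hu, Matrix.mulVec_mulVec]; exact hvz
    have h6 : v = (β:ℂ) • u - (α:ℂ) • Mc.mulVec u := by
      rw [← hvu, hPc, Matrix.sub_mulVec, Matrix.smul_mulVec, Matrix.smul_mulVec,
        Matrix.one_mulVec]
    rw [h6] at h5
    have heig : (1 + (α:ℂ)*z) • Mc.mulVec u = ((β:ℂ)*z) • u := by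
      linear_combination (norm := module) h5
    by_cases hcase : (1 + (α:ℂ)*z) = 0
    · exfalso
      rw [hcase, zero_smul] at heig
      rcases smul_eq_zero.mp heig.symm with h | h
      · rcases mul_eq_zero.mp h with h' | h'
        · exact Complex.ofReal_ne_zero.mpr hβ.ne' h'
        · rw [h', mul_zero, add_zero] at hcase
          exact one_ne_zero hcase
      · exact hu0 h
    · have heig2 : Mc.mulVec u = (((β:ℂ)*z) / (1 + (α:ℂ)*z)) • u := by
        have h7 := congrArg (fun w => (1 + (α:ℂ)*z)⁻¹ • w) heig
        simp only [smul_smul, inv_mul_cancel₀ hcase, one_smul] at h7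
        rw [h7, div_eq_inv_mul]
      have hmem := (mem_spec_iff Mc _).2 ⟨u, hu0, heig2⟩
      obtain ⟨x, hx0, hxe⟩ := hreal _ hmem
      have hxρ : |x| ≤ specRad M := by
        have := habsρ _ hmem
        rwa [hxe, Complex.norm_real, Real.norm_eq_abs] at this
      have hd : 0 < β - α*x := by nlinarith
      have h7 : (x:ℂ) * (1 + (α:ℂ)*z) = (β:ℂ)*z := by
        rw [← hxe, div_mul_cancel₀ _ hcase]
      have hz_eq : z = ((x / (β - α*x) : ℝ) : ℂ) := by
        have hdc : ((β - α*x : ℝ) : ℂ) ≠ 0 := Complex.ofReal_ne_zero.mpr hd.ne'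
        rw [Complex.ofReal_div, eq_div_iff hdc]
        push_cast
        linear_combination -h7
      rw [hz_eq, Complex.norm_real, Real.norm_eq_abs]
      have habs : |x / (β - α*x)| = |x| / (β + α*|x|) := by
        rw [abs_div, abs_of_pos hd, abs_of_nonpos hx0]
        ring_nf
      rw [habs, div_le_div_iff₀ (by nlinarith [abs_nonneg x]) hβρ]
      nlinarith [abs_nonneg x, mul_le_mul_of_nonneg_left hxρ hβ.le]
  -- norm bound for Nc
  have hn1 : 0 ≤ norm1 N := Real.iSup_nonneg fun j => Finset.sum_nonneg fun i _ => abs_nonneg _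
  have hninf : 0 ≤ normInf N := Real.iSup_nonneg fun i => Finset.sum_nonneg fun j _ => abs_nonneg _
  have hNnorm : ‖Matrix.toEuclideanCLM (𝕜 := ℂ) Nc‖ ≤ Real.sqrt (norm1 N * normInf N) := by
    have hNN : ‖Matrix.toEuclideanCLM (𝕜 := ℂ) Nc‖ * ‖Matrix.toEuclideanCLM (𝕜 := ℂ) Nc‖ ≤
        norm1 N * normInf N := by
      rw [← CStarRing.norm_star_mul_self]
      have hstar : star (Matrix.toEuclideanCLM (𝕜 := ℂ) Nc) =
          Matrix.toEuclideanCLM (𝕜 := ℂ) (Ncᴴ) := by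
        rw [← map_star, Matrix.star_eq_conjTranspose]
      rw [hstar, ← _root_.map_mul]
      refine herm_norm_le (Matrix.isHermitian_conjTranspose_mul_self Nc)
        (mul_nonneg hn1 hninf) ?_
      intro z hz
      obtain ⟨i, hi⟩ := spec_rowsum _ hz
      refine hi.trans ?_
      have hentry : ∀ j, ‖(Ncᴴ * Nc) i j‖ ≤ ∑ k, |N k i| * |N k j| := by
        intro j
        rw [Matrix.mul_apply]
        refine (norm_sum_le _ _).trans (Finset.sum_le_sum fun k _ => ?_)
        refine le_of_eq ?_
        rw [hNcdef]
        simp [Matrix.conjTranspose_apply, Matrix.map_apply, Complex.norm_conj,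
          Complex.norm_real]
      calc ∑ j, ‖(Ncᴴ * Nc) i j‖ ≤ ∑ j, ∑ k, |N k i| * |N k j| :=
            Finset.sum_le_sum fun j _ => hentry j
        _ = ∑ k, |N k i| * ∑ j, |N k j| := by
            rw [Finset.sum_comm]
            exact Finset.sum_congr rfl fun k _ => by rw [Finset.mul_sum]
        _ ≤ ∑ k, |N k i| * normInf N :=
            Finset.sum_le_sum fun k _ => mul_le_mul_of_nonneg_left
              (le_ciSup (f := fun i => ∑ j, |N i j|) (Set.Finite.bddAbove (Set.finite_range _)) k) (abs_nonneg _)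
        _ = (∑ k, |N k i|) * normInf N := by rw [Finset.sum_mul]
        _ ≤ norm1 N * normInf N := mul_le_mul_of_nonneg_right
              (le_ciSup (f := fun j => ∑ k, |N k j|) (Set.Finite.bddAbove (Set.finite_range _)) i) hninf
    exact (Real.le_sqrt (norm_nonneg _) (mul_nonneg hn1 hninf)).2 (by rw [pow_two]; exact hNN)
  -- main estimate
  have hRHS : 0 ≤ α ^ 2 * specRad M * Real.sqrt (norm1 N * normInf N) /
      (β ^ 2 + α * β * specRad M) := by
    apply div_nonneg
    · exact mul_nonneg (mul_nonneg (by positivity) hρnn) (Real.sqrt_nonneg _)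
    · nlinarith
  have hSig : ((-α) • (P⁻¹ * N)).map Complex.ofReal = (-(α:ℂ)) • (Pc⁻¹ * Nc) := by
    rw [← hPinv, hNcdef]
    have hmul : ((P⁻¹).map Complex.ofReal) * (N.map Complex.ofReal) =
        (P⁻¹ * N).map Complex.ofRealHom := (Matrix.map_mul (f := Complex.ofRealHom)).symm
    rw [hmul]
    ext p q
    simp only [Matrix.map_apply, Matrix.smul_apply, smul_eq_mul, Complex.ofRealHom_eq_coe]
    push_cast
    ring
  have hLHS : specRad ((-α) • (P⁻¹ * N)) =
      sSup ((fun z : ℂ => ‖z‖) '' spectrum ℂ ((-(α:ℂ)) • (Pc⁻¹ * Nc))) := by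
    unfold specRad
    rw [hSig]
  rw [hLHS]
  refine Real.sSup_le ?_ hRHS
  rintro r ⟨z, hz, rfl⟩
  rcases eq_or_ne z 0 with rfl | hz0
  · simpa using hRHS
  obtain ⟨v, hv, hvz⟩ := (mem_spec_iff _ _).1 hz
  have ha0 : (α:ℂ) ≠ 0 := Complex.ofReal_ne_zero.mpr hα.ne'
  have hb0 : (β:ℂ) ≠ 0 := Complex.ofReal_ne_zero.mpr hβ.ne'
  have hna0 : (-(α:ℂ)) ≠ 0 := neg_ne_zero.mpr ha0
  set c : ℂ := (-(α:ℂ))⁻¹ * z with hcdef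
  have hc0 : c ≠ 0 := mul_ne_zero (inv_ne_zero hna0) hz0
  have h1 : (Pc⁻¹ * Nc).mulVec v = c • v := by
    rw [Matrix.smul_mulVec] at hvz
    have h1a := congrArg (fun w => (-(α:ℂ))⁻¹ • w) hvz
    simp only [smul_smul, inv_mul_cancel₀ hna0, one_smul] at h1a
    exact h1a
  have h2 : Nc.mulVec v = c • Pc.mulVec v := by
    have h2a := congrArg (fun w => Pc.mulVec w) h1
    simp only [Matrix.mulVec_mulVec, Matrix.mulVec_smul] at h2a
    rw [← Matrix.mul_assoc, hPr, Matrix.one_mul] at h2a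
    exact h2a
  have hNN : Nc * Nc = 0 := by
    have h := (Matrix.map_mul (f := Complex.ofRealHom) (L := N) (M := N)).symm
    rw [hNcdef]
    rw [show (N.map Complex.ofReal) * (N.map Complex.ofReal) = (N * N).map Complex.ofRealHom
      from h, hNnil]
    exact Matrix.map_zero _ Complex.ofReal_zero
  have h4 : Nc.mulVec (Pc.mulVec v) = 0 := by
    have h4a : Nc.mulVec (Nc.mulVec v) = 0 := by
      rw [Matrix.mulVec_mulVec, hNN, Matrix.zero_mulVec]
    rw [h2, Matrix.mulVec_smul] at h4a
    rcases smul_eq_zero.mp h4a with h | h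
    · exact absurd h hc0
    · exact h
  set w := Mc.mulVec v with hwdef
  have h5 : (β:ℂ) • Nc.mulVec v = (α:ℂ) • Nc.mulVec w := by
    have hPcv : Pc.mulVec v = (β:ℂ) • v - (α:ℂ) • w := by
      rw [hPc, Matrix.sub_mulVec, Matrix.smul_mulVec, Matrix.smul_mulVec,
        Matrix.one_mulVec, hwdef]
    rw [hPcv, Matrix.mulVec_sub, Matrix.mulVec_smul, Matrix.mulVec_smul, sub_eq_zero] at h4
    exact h4
  have hvw : v = (c⁻¹ * ((α:ℂ) * (β:ℂ)⁻¹)) • Pc⁻¹.mulVec (Nc.mulVec w) := by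
    have hNv : Nc.mulVec v = ((α:ℂ) * (β:ℂ)⁻¹) • Nc.mulVec w := by
      have h5a := congrArg (fun x => (β:ℂ)⁻¹ • x) h5
      simp only [smul_smul, inv_mul_cancel₀ hb0, one_smul] at h5a
      rw [h5a]
      congr 1
      ring
    have hPcv2 : Pc.mulVec v = (c⁻¹ * ((α:ℂ)*(β:ℂ)⁻¹)) • Nc.mulVec w := by
      have h8 := h2.symm.trans hNv
      have h9 := congrArg (fun x => c⁻¹ • x) h8
      simp only [smul_smul, inv_mul_cancel₀ hc0, one_smul] at h9
      exact h9
    calc v = Pc⁻¹.mulVec (Pc.mulVec v) := by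
          rw [Matrix.mulVec_mulVec, hPl, Matrix.one_mulVec]
      _ = _ := by rw [hPcv2, Matrix.mulVec_smul]
  have hw0 : w ≠ 0 := by
    intro h
    apply hv
    rw [hvw, h, Matrix.mulVec_zero, Matrix.mulVec_zero, smul_zero]
  have hs0 : (c⁻¹ * ((α:ℂ) * (β:ℂ)⁻¹)) ≠ 0 :=
    mul_ne_zero (inv_ne_zero hc0) (mul_ne_zero ha0 (inv_ne_zero hb0))
  have hKeig : (Mc * Pc⁻¹ * Nc).mulVec w = (c * (β:ℂ) * (α:ℂ)⁻¹) • w := by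
    have h10 := congrArg (fun x => Mc.mulVec x) hvw
    simp only [Matrix.mulVec_smul, Matrix.mulVec_mulVec] at h10
    rw [← hwdef] at h10
    have h11 := congrArg (fun x => (c⁻¹ * ((α:ℂ)*(β:ℂ)⁻¹))⁻¹ • x) h10
    simp only [smul_smul, inv_mul_cancel₀ hs0, one_smul] at h11
    rw [← Matrix.mul_assoc] at h11
    rw [← h11]
    congr 1
    field_simp
  have hμ := (mem_spec_iff (Mc * Pc⁻¹ * Nc) _).2 ⟨w, hw0, hKeig⟩
  have hbound : ‖c * (β:ℂ) * (α:ℂ)⁻¹‖ ≤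
      (specRad M / (β + α * specRad M)) * Real.sqrt (norm1 N * normInf N) := by
    have hle := spec_abs_le_norm _ hμ
    have hsplit : Matrix.toEuclideanCLM (𝕜 := ℂ) (Mc * Pc⁻¹ * Nc) =
        Matrix.toEuclideanCLM (𝕜 := ℂ) (Mc * Pc⁻¹) * Matrix.toEuclideanCLM (𝕜 := ℂ) Nc :=
      _root_.map_mul _ _ _
    rw [hsplit] at hle
    refine hle.trans ((norm_mul_le _ _).trans ?_)
    exact mul_le_mul hMPnorm hNnorm (norm_nonneg _) (div_nonneg hρnn hβρ.le)
  have habsc : ‖c * (β:ℂ) * (α:ℂ)⁻¹‖ = ‖z‖ * β / α^2 := by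
    rw [hcdef]
    simp only [norm_mul, norm_inv]
    rw [← Complex.ofReal_neg]
    simp only [Complex.norm_real, Real.norm_eq_abs]
    rw [abs_neg, abs_of_pos hα, abs_of_pos hβ]
    field_simp
    try tauto
  rw [habsc] at hbound
  have final : ‖z‖ ≤
      (specRad M / (β + α * specRad M)) * Real.sqrt (norm1 N * normInf N) * α^2 / β := by
    rw [le_div_iff₀ hβ]
    calc ‖z‖ * β = (‖z‖ * β / α^2) * α^2 := by field_simp
      _ ≤ _ := mul_le_mul_of_nonneg_right hbound (by positivity)
  refine final.trans (le_of_eq ?_)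
  have hd1 : β ^ 2 + α * β * specRad M = β * (β + α * specRad M) := by ring
  rw [hd1]
  field_simp
end

section
/- Let m_x, m_y ≥ 2, Δx, Δy > 0, let M_N be the Neumann Kronecker-sum Laplacian of sizes (m_x, m_y) and steps (Δx, Δy), and let α > 0 and β > 0 satisfy (α/β)·(1/Δx² + 1/Δy²) < 1. Then the matrix P_N = β·I − α·M_N is invertible and ‖P_N⁻¹‖₂ < 1/(β − α·(1/Δx² + 1/Δy²)). -/
open Matrix Kronecker

lemma neuLap_apply (m : ℕ) (Δ : ℝ) (i j : Fin m) :
    neuLap m Δ i j =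
      if (i : ℕ) = (j : ℕ) then -2 / Δ ^ 2
      else if ((i : ℕ) = 0 ∧ (j : ℕ) = 1) ∨ ((i : ℕ) = m - 1 ∧ (j : ℕ) = m - 2) then 2 / Δ ^ 2
      else if (i : ℕ) + 1 = (j : ℕ) ∨ (j : ℕ) + 1 = (i : ℕ) then 1 / Δ ^ 2
      else 0 := by
  simp only [neuLap, Matrix.of_apply, Fin.ext_iff]

lemma neuLap_zero {m : ℕ} (Δ : ℝ) {i j : Fin m} (h : (i:ℕ) ≠ j) (h2 : (i:ℕ)+1 ≠ j)
    (h3 : (j:ℕ)+1 ≠ i) : neuLap m Δ i j = 0 := by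
  have hi := i.isLt; have hj := j.isLt
  rw [neuLap_apply, if_neg h, if_neg (by omega), if_neg (by omega)]

/-- weighted row+column sparse sum bound -/
lemma neuLap_key (m : ℕ) (hm : 2 ≤ m) (Δ : ℝ) (hΔ : 0 < Δ) (k : Fin m) :
    ∑ j : Fin m,
      ((if j = k then 0 else
          neuLap m Δ k j * (if ((k:ℕ)=0 ∧ (j:ℕ)=1) ∨ ((k:ℕ)=m-1 ∧ (j:ℕ)=m-2) then (1:ℝ) else 1/2))
        + (if j = k then 0 else
          neuLap m Δ j k * (if ((j:ℕ)=0 ∧ (k:ℕ)=1) ∨ ((j:ℕ)=m-1 ∧ (k:ℕ)=m-2) then (1/4:ℝ) else 1/2)))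
      ≤ 5 / (2 * Δ ^ 2) := by
  have hΔ2 : (0:ℝ) < Δ ^ 2 := by positivity
  set g : Fin m → ℝ := fun j =>
      (if j = k then 0 else
          neuLap m Δ k j * (if ((k:ℕ)=0 ∧ (j:ℕ)=1) ∨ ((k:ℕ)=m-1 ∧ (j:ℕ)=m-2) then (1:ℝ) else 1/2))
        + (if j = k then 0 else
          neuLap m Δ j k * (if ((j:ℕ)=0 ∧ (k:ℕ)=1) ∨ ((j:ℕ)=m-1 ∧ (k:ℕ)=m-2) then (1/4:ℝ) else 1/2))
    with hg
  have hk := k.isLt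
  -- a generic evaluation of g at a non-k point
  have gval : ∀ j : Fin m, (j:ℕ) ≠ k →
      g j = neuLap m Δ k j * (if ((k:ℕ)=0 ∧ (j:ℕ)=1) ∨ ((k:ℕ)=m-1 ∧ (j:ℕ)=m-2) then (1:ℝ) else 1/2)
        + neuLap m Δ j k * (if ((j:ℕ)=0 ∧ (k:ℕ)=1) ∨ ((j:ℕ)=m-1 ∧ (k:ℕ)=m-2) then (1/4:ℝ) else 1/2) := by
    intro j hj
    rw [hg]
    simp only
    rw [if_neg (fun h => hj (congrArg Fin.val h)), if_neg (fun h => hj (congrArg Fin.val h))]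
  have gz : ∀ j : Fin m, (k:ℕ)+1 ≠ j → (j:ℕ)+1 ≠ k → g j = 0 := by
    intro j h1 h2
    by_cases hj : (j:ℕ) = k
    · rw [hg]; simp only
      rw [if_pos (Fin.ext hj), if_pos (Fin.ext hj)]; ring
    · rw [gval j hj, neuLap_zero Δ (by omega) h1 h2, neuLap_zero Δ hj h2 h1]; ring
  have hbound : ∀ a b : ℝ, a = 5/(2*Δ^2) → a + b ≤ 5/(2*Δ^2) + b := by
    intro a b h; rw [h]
  by_cases hk0 : (k:ℕ) = 0
  · have h1m : 1 < m := by omega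
    have hsum : ∑ j, g j = g ⟨1, h1m⟩ := by
      refine Finset.sum_eq_single_of_mem _ (Finset.mem_univ _) (fun j _ hne => gz j ?_ ?_)
      · intro h; exact hne (Fin.ext (by simp only [Fin.val_mk, and_true, true_and, or_true, true_or] <;> omega))
      · omega
    rw [hsum, gval _ (by simp only [Fin.val_mk, and_true, true_and, or_true, true_or] <;> omega)]
    have e1 : neuLap m Δ k ⟨1, h1m⟩ = 2/Δ^2 := by
      rw [neuLap_apply, if_neg (by simp only [Fin.val_mk, and_true, true_and, or_true, true_or] <;> omega),
        if_pos (Or.inl ⟨hk0, by simp only [Fin.val_mk]⟩)]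
    have e2 : neuLap m Δ ⟨1, h1m⟩ k *
        (if ((⟨1,h1m⟩ : Fin m):ℕ)=0 ∧ (k:ℕ)=1 ∨ ((⟨1,h1m⟩ : Fin m):ℕ)=m-1 ∧ (k:ℕ)=m-2
          then (1/4:ℝ) else 1/2) = 1/(2*Δ^2) := by
      by_cases hm2 : m = 2
      · rw [neuLap_apply, if_neg (by simp only [Fin.val_mk, and_true, true_and, or_true, true_or] <;> omega),
          if_pos (Or.inr (by simp only [Fin.val_mk, and_true, true_and, or_true, true_or] <;> omega)),
          if_pos (Or.inr (by simp only [Fin.val_mk, and_true, true_and, or_true, true_or] <;> omega))]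
        field_simp; ring
      · rw [neuLap_apply, if_neg (by simp only [Fin.val_mk, and_true, true_and, or_true, true_or] <;> omega),
          if_neg (by simp only [Fin.val_mk, and_true, true_and, or_true, true_or] <;> omega),
          if_pos (by simp only [Fin.val_mk, and_true, true_and, or_true, true_or] <;> omega),
          if_neg (by simp only [Fin.val_mk, and_true, true_and, or_true, true_or] <;> omega)]
        field_simp
    rw [e1, e2, if_pos (Or.inl ⟨hk0, by simp only [Fin.val_mk]⟩)]
    have : 2/Δ^2 * 1 + 1/(2*Δ^2) = 5/(2*Δ^2) := by field_simp; ring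
    rw [this]
  · by_cases hkm : (k:ℕ) = m - 1
    · have h2m : m - 2 < m := by omega
      have hsum : ∑ j, g j = g ⟨m-2, h2m⟩ := by
        refine Finset.sum_eq_single_of_mem _ (Finset.mem_univ _) (fun j _ hne => gz j ?_ ?_)
        · have := j.isLt; omega
        · intro h; exact hne (Fin.ext (by simp only [Fin.val_mk, and_true, true_and, or_true, true_or] <;> omega))
      rw [hsum, gval _ (by simp only [Fin.val_mk, and_true, true_and, or_true, true_or] <;> omega)]
      have e1 : neuLap m Δ k ⟨m-2, h2m⟩ = 2/Δ^2 := by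
        rw [neuLap_apply, if_neg (by simp only [Fin.val_mk, and_true, true_and, or_true, true_or] <;> omega),
          if_pos (by simp only [Fin.val_mk, and_true, true_and, or_true, true_or] <;> omega)]
      have e2 : neuLap m Δ ⟨m-2, h2m⟩ k *
          (if ((⟨m-2,h2m⟩ : Fin m):ℕ)=0 ∧ (k:ℕ)=1 ∨ ((⟨m-2,h2m⟩ : Fin m):ℕ)=m-1 ∧ (k:ℕ)=m-2
            then (1/4:ℝ) else 1/2) = 1/(2*Δ^2) := by
        by_cases hm2 : m = 2
        · rw [neuLap_apply, if_neg (by simp only [Fin.val_mk, and_true, true_and, or_true, true_or] <;> omega),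
            if_pos (by simp only [Fin.val_mk, and_true, true_and, or_true, true_or] <;> omega),
            if_pos (by simp only [Fin.val_mk, and_true, true_and, or_true, true_or] <;> omega)]
          field_simp; ring
        · rw [neuLap_apply, if_neg (by simp only [Fin.val_mk, and_true, true_and, or_true, true_or] <;> omega),
            if_neg (by simp only [Fin.val_mk, and_true, true_and, or_true, true_or] <;> omega),
            if_pos (by simp only [Fin.val_mk, and_true, true_and, or_true, true_or] <;> omega),
            if_neg (by simp only [Fin.val_mk, and_true, true_and, or_true, true_or] <;> omega)]
          field_simp
      rw [e1, e2, if_pos (by simp only [Fin.val_mk, and_true, true_and, or_true, true_or] <;> omega)]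
      have : 2/Δ^2 * 1 + 1/(2*Δ^2) = 5/(2*Δ^2) := by field_simp; ring
      rw [this]
    · -- interior
      have ham : (k:ℕ) + 1 < m := by omega
      have ham' : (k:ℕ) - 1 < m := by omega
      have hne12 : (⟨(k:ℕ)-1, ham'⟩ : Fin m) ≠ ⟨(k:ℕ)+1, ham⟩ := by
        intro h; have := congrArg Fin.val h; simp only [Fin.val_mk] at this; omega
      have hsum : ∑ j, g j = g ⟨(k:ℕ)-1, ham'⟩ + g ⟨(k:ℕ)+1, ham⟩ := by
        rw [← Finset.sum_pair hne12]
        refine (Finset.sum_subset (Finset.subset_univ _) (fun j _ hj => ?_)).symm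
        rw [Finset.mem_insert, Finset.mem_singleton] at hj
        push_neg at hj
        obtain ⟨h1, h2⟩ := hj
        refine gz j ?_ ?_
        · intro h; exact h2 (Fin.ext (by simp only [Fin.val_mk, and_true, true_and, or_true, true_or] <;> omega))
        · intro h; exact h1 (Fin.ext (by simp only [Fin.val_mk, and_true, true_and, or_true, true_or] <;> omega))
      rw [hsum, gval _ (by simp only [Fin.val_mk, and_true, true_and, or_true, true_or] <;> omega),
        gval _ (by simp only [Fin.val_mk, and_true, true_and, or_true, true_or] <;> omega)]
      have e1 : neuLap m Δ k ⟨(k:ℕ)-1, ham'⟩ = 1/Δ^2 := by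
        rw [neuLap_apply, if_neg (by simp only [Fin.val_mk, and_true, true_and, or_true, true_or] <;> omega),
          if_neg (by simp only [Fin.val_mk, and_true, true_and, or_true, true_or] <;> omega),
          if_pos (by simp only [Fin.val_mk, and_true, true_and, or_true, true_or] <;> omega)]
      have e1' : neuLap m Δ k ⟨(k:ℕ)+1, ham⟩ = 1/Δ^2 := by
        rw [neuLap_apply, if_neg (by simp only [Fin.val_mk, and_true, true_and, or_true, true_or] <;> omega),
          if_neg (by simp only [Fin.val_mk, and_true, true_and, or_true, true_or] <;> omega),
          if_pos (by simp only [Fin.val_mk, and_true, true_and, or_true, true_or] <;> omega)]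
      have e2 : neuLap m Δ ⟨(k:ℕ)-1, ham'⟩ k *
          (if ((⟨(k:ℕ)-1,ham'⟩ : Fin m):ℕ)=0 ∧ (k:ℕ)=1 ∨ ((⟨(k:ℕ)-1,ham'⟩ : Fin m):ℕ)=m-1 ∧ (k:ℕ)=m-2
            then (1/4:ℝ) else 1/2) = 1/(2*Δ^2) := by
        by_cases hc : (k:ℕ) = 1
        · rw [neuLap_apply, if_neg (by simp only [Fin.val_mk, and_true, true_and, or_true, true_or] <;> omega),
            if_pos (by simp only [Fin.val_mk, and_true, true_and, or_true, true_or] <;> omega),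
            if_pos (by simp only [Fin.val_mk, and_true, true_and, or_true, true_or] <;> omega)]
          field_simp; ring
        · rw [neuLap_apply, if_neg (by simp only [Fin.val_mk, and_true, true_and, or_true, true_or] <;> omega),
            if_neg (by simp only [Fin.val_mk, and_true, true_and, or_true, true_or] <;> omega),
            if_pos (by simp only [Fin.val_mk, and_true, true_and, or_true, true_or] <;> omega),
            if_neg (by simp only [Fin.val_mk, and_true, true_and, or_true, true_or] <;> omega)]
          field_simp
      have e2' : neuLap m Δ ⟨(k:ℕ)+1, ham⟩ k *
          (if ((⟨(k:ℕ)+1,ham⟩ : Fin m):ℕ)=0 ∧ (k:ℕ)=1 ∨ ((⟨(k:ℕ)+1,ham⟩ : Fin m):ℕ)=m-1 ∧ (k:ℕ)=m-2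
            then (1/4:ℝ) else 1/2) = 1/(2*Δ^2) := by
        by_cases hc : (k:ℕ) = m - 2
        · rw [neuLap_apply, if_neg (by simp only [Fin.val_mk, and_true, true_and, or_true, true_or] <;> omega),
            if_pos (by simp only [Fin.val_mk, and_true, true_and, or_true, true_or] <;> omega),
            if_pos (by simp only [Fin.val_mk, and_true, true_and, or_true, true_or] <;> omega)]
          field_simp; ring
        · rw [neuLap_apply, if_neg (by simp only [Fin.val_mk, and_true, true_and, or_true, true_or] <;> omega),
            if_neg (by simp only [Fin.val_mk, and_true, true_and, or_true, true_or] <;> omega),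
            if_pos (by simp only [Fin.val_mk, and_true, true_and, or_true, true_or] <;> omega),
            if_neg (by simp only [Fin.val_mk, and_true, true_and, or_true, true_or] <;> omega)]
          field_simp
      rw [e1, e1', e2, e2', if_neg (by simp only [Fin.val_mk, and_true, true_and, or_true, true_or] <;> omega),
        if_neg (by simp only [Fin.val_mk, and_true, true_and, or_true, true_or] <;> omega)]
      have h5 : (0:ℝ) < 2*Δ^2 := by positivity
      have : 1 / Δ ^ 2 * (1 / 2) + 1 / (2 * Δ ^ 2) + (1 / Δ ^ 2 * (1 / 2) + 1 / (2 * Δ ^ 2)) = 2/Δ^2 := by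
        field_simp; ring
      rw [this, div_le_div_iff₀ (by positivity) h5]
      nlinarith [hΔ2]

lemma neuLap_qf (m : ℕ) (hm : 2 ≤ m) (Δ : ℝ) (hΔ : 0 < Δ) (x : Fin m → ℝ) :
    ∑ i, ∑ j, x i * neuLap m Δ i j * x j ≤ (1/(2*Δ^2)) * ∑ i, x i ^ 2 := by
  have hΔ2 : (0:ℝ) < Δ ^ 2 := by positivity
  set w1 : Fin m → Fin m → ℝ := fun i j =>
    if ((i:ℕ)=0 ∧ (j:ℕ)=1) ∨ ((i:ℕ)=m-1 ∧ (j:ℕ)=m-2) then (1:ℝ) else 1/2 with hw1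
  set w2 : Fin m → Fin m → ℝ := fun i j =>
    if ((i:ℕ)=0 ∧ (j:ℕ)=1) ∨ ((i:ℕ)=m-1 ∧ (j:ℕ)=m-2) then (1/4:ℝ) else 1/2 with hw2
  set R : Fin m → Fin m → ℝ := fun i j =>
    (if i = j then -2/Δ^2 * x i ^ 2 else 0)
      + (if j = i then 0 else neuLap m Δ i j * w1 i j) * x i ^ 2
      + (if i = j then 0 else neuLap m Δ i j * w2 i j) * x j ^ 2 with hR
  have hpt : ∀ i j : Fin m, x i * neuLap m Δ i j * x j ≤ R i j := by
    intro i j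
    by_cases hij : i = j
    · subst hij
      rw [hR]; simp only [if_pos rfl]
      rw [neuLap_apply, if_pos rfl]
      have : x i * (-2/Δ^2) * x i = -2/Δ^2 * x i ^ 2 + 0 * x i ^ 2 + 0 * x i ^ 2 := by ring
      rw [this]; simp
    · have hnn : 0 ≤ neuLap m Δ i j := by
        rw [neuLap_apply, if_neg (fun h => hij (Fin.ext h))]
        split_ifs <;> positivity
      rw [hR]; simp only
      rw [if_neg hij, if_neg (fun h => hij h.symm), if_neg hij]
      rw [hw1, hw2]; simp only
      by_cases hs : ((i:ℕ)=0 ∧ (j:ℕ)=1) ∨ ((i:ℕ)=m-1 ∧ (j:ℕ)=m-2)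
      · rw [if_pos hs, if_pos hs]
        nlinarith [mul_nonneg hnn (sq_nonneg (x i - x j / 2))]
      · rw [if_neg hs, if_neg hs]
        nlinarith [mul_nonneg hnn (sq_nonneg (x i - x j))]
  have step1 : ∑ i, ∑ j, x i * neuLap m Δ i j * x j ≤ ∑ i, ∑ j, R i j :=
    Finset.sum_le_sum fun i _ => Finset.sum_le_sum fun j _ => hpt i j
  have step2 : ∑ i, ∑ j, R i j
      = ∑ k, ((-2/Δ^2) * x k ^ 2)
        + ∑ k, (∑ j, (if j = k then 0 else neuLap m Δ k j * w1 k j)) * x k ^ 2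
        + ∑ k, (∑ i, (if i = k then 0 else neuLap m Δ i k * w2 i k)) * x k ^ 2 := by
    rw [hR]
    simp only [Finset.sum_add_distrib]
    congr 1
    · congr 1
      · apply Finset.sum_congr rfl; intro i _
        simp [Finset.sum_ite_eq]
      · apply Finset.sum_congr rfl; intro i _
        rw [Finset.sum_mul]
    · rw [Finset.sum_comm]
      apply Finset.sum_congr rfl; intro j _
      rw [Finset.sum_mul]
  have step3 : ∀ k : Fin m,
      (∑ j, (if j = k then 0 else neuLap m Δ k j * w1 k j))
        + (∑ i, (if i = k then 0 else neuLap m Δ i k * w2 i k)) ≤ 5/(2*Δ^2) := by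
    intro k
    rw [← Finset.sum_add_distrib]
    exact neuLap_key m hm Δ hΔ k
  calc ∑ i, ∑ j, x i * neuLap m Δ i j * x j ≤ ∑ i, ∑ j, R i j := step1
    _ = ∑ k, ((-2/Δ^2) + (∑ j, (if j = k then 0 else neuLap m Δ k j * w1 k j))
          + (∑ i, (if i = k then 0 else neuLap m Δ i k * w2 i k))) * x k ^ 2 := by
        rw [step2, ← Finset.sum_add_distrib, ← Finset.sum_add_distrib]
        apply Finset.sum_congr rfl; intro k _; ring
    _ ≤ ∑ k, (1/(2*Δ^2)) * x k ^ 2 := by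
        apply Finset.sum_le_sum; intro k _
        apply mul_le_mul_of_nonneg_right _ (sq_nonneg _)
        have h1 : (1:ℝ)/(2*Δ^2) = -2/Δ^2 + 5/(2*Δ^2) := by field_simp; ring
        have := step3 k
        rw [h1]; linarith
    _ = (1/(2*Δ^2)) * ∑ i, x i ^ 2 := (Finset.mul_sum _ _ _).symm

lemma kron_qf (mx my : ℕ) (hmx : 2 ≤ mx) (hmy : 2 ≤ my) (Δx Δy : ℝ)
    (hΔx : 0 < Δx) (hΔy : 0 < Δy) (x : Fin my × Fin mx → ℝ) :
    ∑ p, ∑ q, x p * kronLapN mx my Δx Δy p q * x q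
      ≤ ((1/(2*Δx^2)) + (1/(2*Δy^2))) * ∑ p, x p ^ 2 := by
  have split : ∑ p, ∑ q, x p * kronLapN mx my Δx Δy p q * x q
      = (∑ p, ∑ q, x p * (((1 : Matrix (Fin my) (Fin my) ℝ) ⊗ₖ neuLap mx Δx) p q) * x q)
        + (∑ p, ∑ q, x p * ((neuLap my Δy ⊗ₖ (1 : Matrix (Fin mx) (Fin mx) ℝ)) p q) * x q) := by
    rw [← Finset.sum_add_distrib]
    apply Finset.sum_congr rfl; intro p _
    rw [← Finset.sum_add_distrib]
    apply Finset.sum_congr rfl; intro q _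
    simp [kronLapN, Matrix.add_apply]; ring
  have hx : ∑ p : Fin my × Fin mx, x p ^ 2 = ∑ iy, ∑ ix, x (iy, ix) ^ 2 :=
    Fintype.sum_prod_type _
  have S1 : (∑ p, ∑ q, x p * (((1 : Matrix (Fin my) (Fin my) ℝ) ⊗ₖ neuLap mx Δx) p q) * x q)
      = ∑ iy, ∑ ix, ∑ jx, x (iy, ix) * neuLap mx Δx ix jx * x (iy, jx) := by
    rw [Fintype.sum_prod_type]
    apply Finset.sum_congr rfl; intro iy _
    apply Finset.sum_congr rfl; intro ix _
    rw [Fintype.sum_prod_type, Finset.sum_comm]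
    apply Finset.sum_congr rfl; intro jx _
    simp [Matrix.kroneckerMap_apply, Matrix.one_apply]
  have S2 : (∑ p, ∑ q, x p * ((neuLap my Δy ⊗ₖ (1 : Matrix (Fin mx) (Fin mx) ℝ)) p q) * x q)
      = ∑ ix, ∑ iy, ∑ jy, x (iy, ix) * neuLap my Δy iy jy * x (jy, ix) := by
    rw [Fintype.sum_prod_type, Finset.sum_comm]
    apply Finset.sum_congr rfl; intro ix _
    apply Finset.sum_congr rfl; intro iy _
    rw [Fintype.sum_prod_type]
    apply Finset.sum_congr rfl; intro jy _
    simp [Matrix.kroneckerMap_apply, Matrix.one_apply]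
  have B1 : ∑ iy, ∑ ix, ∑ jx, x (iy, ix) * neuLap mx Δx ix jx * x (iy, jx)
      ≤ (1/(2*Δx^2)) * ∑ p, x p ^ 2 := by
    rw [hx, Finset.mul_sum]
    apply Finset.sum_le_sum; intro iy _
    exact neuLap_qf mx hmx Δx hΔx (fun i => x (iy, i))
  have B2 : ∑ ix, ∑ iy, ∑ jy, x (iy, ix) * neuLap my Δy iy jy * x (jy, ix)
      ≤ (1/(2*Δy^2)) * ∑ p, x p ^ 2 := by
    have hx' : ∑ p : Fin my × Fin mx, x p ^ 2 = ∑ ix, ∑ iy, x (iy, ix) ^ 2 := by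
      rw [Fintype.sum_prod_type, Finset.sum_comm]
    rw [hx', Finset.mul_sum]
    apply Finset.sum_le_sum; intro ix _
    exact neuLap_qf my hmy Δy hΔy (fun i => x (i, ix))
  rw [split, S1, S2, add_mul]
  exact add_le_add B1 B2

theorem stmt12 (mx my : ℕ) (hmx : 2 ≤ mx) (hmy : 2 ≤ my)
    (Δx Δy : ℝ) (hΔx : 0 < Δx) (hΔy : 0 < Δy)
    (α β : ℝ) (hα : 0 < α) (hβ : 0 < β)
    (hαβ : (α / β) * (1 / Δx ^ 2 + 1 / Δy ^ 2) < 1)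
    (MN PN : Matrix (Fin my × Fin mx) (Fin my × Fin mx) ℝ)
    (hMN : MN = kronLapN mx my Δx Δy)
    (hPN : PN = β • 1 - α • MN) :
    IsUnit PN ∧ norm2 PN⁻¹ < 1 / (β - α * (1 / Δx ^ 2 + 1 / Δy ^ 2)) := by
  set s : ℝ := 1 / Δx ^ 2 + 1 / Δy ^ 2 with hs
  have hspos : 0 < s := by rw [hs]; positivity
  have hαs : α * s < β := by
    rw [div_mul_eq_mul_div] at hαβ
    exact (div_lt_one hβ).mp hαβ
  have hb : 0 < β - α * s := by linarith
  have hc2 : 0 < β * (β - α * s) := mul_pos hβ hb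
  -- the key coercivity bound
  have key : ∀ x : Fin my × Fin mx → ℝ,
      β * (β - α * s) * ∑ p, x p ^ 2 ≤ ∑ p, (PN.mulVec x p) ^ 2 := by
    intro x
    have hmv : PN.mulVec x = β • x - α • MN.mulVec x := by
      rw [hPN, Matrix.sub_mulVec, Matrix.smul_mulVec, Matrix.smul_mulVec,
        Matrix.one_mulVec]
    have hQ := kron_qf mx my hmx hmy Δx Δy hΔx hΔy x
    rw [← hMN] at hQ
    have hQ' : 2 * ∑ p, x p * MN.mulVec x p ≤ s * ∑ p, x p ^ 2 := by
      have e1 : ∑ p, x p * MN.mulVec x p = ∑ p, ∑ q, x p * MN p q * x q := by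
        apply Finset.sum_congr rfl; intro p _
        rw [Matrix.mulVec, dotProduct, Finset.mul_sum]
        apply Finset.sum_congr rfl; intro q _; ring
      have h2 : s * ∑ p, x p ^ 2 = 2 * (((1/(2*Δx^2)) + (1/(2*Δy^2))) * ∑ p, x p ^ 2) := by
        rw [hs]; ring
      rw [e1, h2]
      linarith [hQ]
    have expand : ∑ p, (PN.mulVec x p) ^ 2
        = β^2 * (∑ p, x p ^ 2) - 2*α*β*(∑ p, x p * MN.mulVec x p)
          + α^2 * ∑ p, (MN.mulVec x p)^2 := by
      rw [hmv]
      have hper : ∀ p, ((β • x - α • MN.mulVec x) p) ^ 2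
          = β^2 * x p ^ 2 - 2*α*β*(x p * (MN.mulVec x) p) + α^2 * ((MN.mulVec x) p)^2 := by
        intro p
        simp only [Pi.sub_apply, Pi.smul_apply, smul_eq_mul]
        ring
      rw [Finset.sum_congr rfl (fun p _ => hper p), Finset.sum_add_distrib,
        Finset.sum_sub_distrib, ← Finset.mul_sum, ← Finset.mul_sum, ← Finset.mul_sum]
    have hB : 0 ≤ ∑ p, (MN.mulVec x p)^2 := Finset.sum_nonneg fun p _ => sq_nonneg _
    have hA : 0 ≤ ∑ p, x p ^ 2 := Finset.sum_nonneg fun p _ => sq_nonneg _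
    rw [expand]
    nlinarith [mul_nonneg (mul_nonneg hα.le hβ.le)
      (by linarith : (0:ℝ) ≤ s * (∑ p, x p ^ 2) - 2 * (∑ p, x p * MN.mulVec x p)),
      mul_nonneg (mul_nonneg hα.le hα.le) hB]
  -- injectivity and unit
  have hinj : Function.Injective PN.mulVec := by
    intro a b hab
    have h0 : PN.mulVec (a - b) = 0 := by
      rw [Matrix.mulVec_sub, hab, sub_self]
    have hk := key (a - b)
    rw [h0] at hk
    have hk' : β * (β - α * s) * ∑ p, (a - b) p ^ 2 ≤ 0 := by simpa using hk
    have hz : ∑ p, (a - b) p ^ 2 ≤ 0 := by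
      by_contra hcon
      push_neg at hcon
      nlinarith [mul_pos hc2 hcon]
    have : ∀ p, (a - b) p = 0 := by
      intro p
      have hnn : 0 ≤ ∑ p, (a - b) p ^ 2 := Finset.sum_nonneg fun p _ => sq_nonneg _
      have heq : ∑ p, (a - b) p ^ 2 = 0 := le_antisymm hz hnn
      have := (Finset.sum_eq_zero_iff_of_nonneg (fun p _ => sq_nonneg ((a-b) p))).mp heq
      exact pow_eq_zero_iff (n := 2) (by norm_num) |>.mp (this p (Finset.mem_univ p))
    have hab0 : a - b = 0 := funext this
    exact sub_eq_zero.mp hab0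
  have hunit : IsUnit PN := (Matrix.mulVec_injective_iff_isUnit).mp hinj
  refine ⟨hunit, ?_⟩
  set c : ℝ := Real.sqrt (β * (β - α * s)) with hcdef
  have hcpos : 0 < c := Real.sqrt_pos.mpr hc2
  have hcsq : c ^ 2 = β * (β - α * s) := Real.sq_sqrt hc2.le
  have hTnorm : ∀ z : EuclideanSpace ℝ (Fin my × Fin mx),
      c * ‖z‖ ≤ ‖toEuclideanCLM (𝕜 := ℝ) PN z‖ := by
    intro z
    have happ : ∀ p, (toEuclideanCLM (𝕜 := ℝ) PN z) p = PN.mulVec z p := fun p => rfl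
    rw [EuclideanSpace.norm_eq, EuclideanSpace.norm_eq]
    have e1 : ∑ p, ‖z p‖ ^ 2 = ∑ p, z p ^ 2 := by
      apply Finset.sum_congr rfl; intro p _; rw [Real.norm_eq_abs, sq_abs]
    have e2 : ∑ p, ‖(toEuclideanCLM (𝕜 := ℝ) PN z) p‖ ^ 2 = ∑ p, (PN.mulVec z p) ^ 2 := by
      apply Finset.sum_congr rfl; intro p _; rw [happ p, Real.norm_eq_abs, sq_abs]
    rw [e1, e2]
    have step : c * Real.sqrt (∑ p, z p ^ 2) = Real.sqrt (c ^ 2 * ∑ p, z p ^ 2) := by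
      rw [Real.sqrt_mul (sq_nonneg c), Real.sqrt_sq hcpos.le]
    rw [step]
    apply Real.sqrt_le_sqrt
    rw [hcsq]
    exact key (fun p => z p)
  have hdet : IsUnit PN.det := (Matrix.isUnit_iff_isUnit_det PN).mp hunit
  have hPP : PN * PN⁻¹ = 1 := Matrix.mul_nonsing_inv PN hdet
  have hmapped : (toEuclideanCLM (𝕜 := ℝ) PN) * (toEuclideanCLM (𝕜 := ℝ) PN⁻¹) = 1 := by
    rw [← _root_.map_mul, hPP, _root_.map_one]
  have hbound : ‖toEuclideanCLM (𝕜 := ℝ) PN⁻¹‖ ≤ 1/c := by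
    apply ContinuousLinearMap.opNorm_le_bound _ (by positivity)
    intro y
    set z := toEuclideanCLM (𝕜 := ℝ) PN⁻¹ y with hz
    have hTz : toEuclideanCLM (𝕜 := ℝ) PN z = y := by
      have h := congrFun (congrArg (DFunLike.coe) hmapped) y
      simpa [ContinuousLinearMap.mul_apply] using h
    have hle := hTnorm z
    rw [hTz] at hle
    rw [one_div, ← div_eq_inv_mul, le_div_iff₀ hcpos]
    linarith [hle]
  have hαspos : 0 < α * s := mul_pos hα hspos
  have hbc : β - α * s < c := by nlinarith [hcsq, hcpos.le, hb]
  have hlt : 1/c < 1/(β - α * s) := one_div_lt_one_div_of_lt hb hbc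
  calc norm2 PN⁻¹ ≤ 1/c := hbound
    _ < 1/(β - α * s) := hlt
end

section
/- Let m_x, m_y ≥ 2, Δx, Δy > 0, let M_N be the Neumann Kronecker-sum Laplacian of sizes (m_x, m_y) and steps (Δx, Δy), and let α > 0 and β > 0 satisfy (α/β)·(1/Δx² + 1/Δy²) < 1; set P_N = β·I − α·M_N. Let N be a real matrix of the same size with ‖N‖₁ ≤ 4·(1/Δx² + 1/Δy²) and ‖N‖_∞ ≤ 4·(1/Δx² + 1/Δy²). Then the spectral radius of Σ_N = −α·P_N⁻¹·N satisfies ρ(Σ_N) ≤ 4·α·(1/Δx² + 1/Δy²) / (β − α·(1/Δx² + 1/Δy²)). -/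
open Matrix Kronecker

open Finset in
/-- The spectral radius is bounded by any uniform bound on absolute row sums. -/
lemma specRad_le_of_rows {n : Type*} [Fintype n] [DecidableEq n] [Nonempty n]
    (A : Matrix n n ℝ) (C : ℝ)
    (hC : 0 ≤ C) (h : ∀ i, ∑ j, |A i j| ≤ C) : specRad A ≤ C := by
  classical
  apply Real.sSup_le _ hC
  rintro x ⟨μ, hμ, rfl⟩
  set M := A.map (Complex.ofReal) with hM
  have hspec : spectrum ℂ M = spectrum ℂ (Matrix.toLinAlgEquiv' M) :=
    (AlgEquiv.spectrum_eq (Matrix.toLinAlgEquiv') M).symm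
  have hμ' : Module.End.HasEigenvalue (Matrix.toLinAlgEquiv' M) μ := by
    rw [Module.End.hasEigenvalue_iff_mem_spectrum, ← hspec]; exact hμ
  obtain ⟨v, hv⟩ := hμ'.exists_hasEigenvector
  have hmv : M.mulVec v = μ • v := by
    have := hv.apply_eq_smul
    rwa [Matrix.toLinAlgEquiv'_apply] at this
  have hvne : v ≠ 0 := hv.2
  obtain ⟨i, -, hi⟩ := Finset.exists_max_image Finset.univ (fun i => ‖v i‖)
    univ_nonempty
  have hvi : 0 < ‖v i‖ := by
    obtain ⟨k, hk⟩ := Function.ne_iff.mp hvne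
    have h1 : 0 < ‖v k‖ := by simpa using hk
    exact lt_of_lt_of_le h1 (hi k (mem_univ k))
  have hrow : ‖μ‖ * ‖v i‖ ≤ C * ‖v i‖ := by
    have h1 : (M.mulVec v) i = μ * v i := by rw [hmv]; simp
    calc ‖μ‖ * ‖v i‖ = ‖(M.mulVec v) i‖ := by
          rw [h1, norm_mul]
      _ = ‖∑ j, M i j * v j‖ := by
          rw [Matrix.mulVec, dotProduct]
      _ ≤ ∑ j, ‖M i j * v j‖ := norm_sum_le _ _
      _ ≤ ∑ j, |A i j| * ‖v i‖ := by
          apply Finset.sum_le_sum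
          intro j _
          rw [norm_mul]
          have : ‖M i j‖ = |A i j| := by simp [hM]
          rw [this]
          exact mul_le_mul_of_nonneg_left (hi j (mem_univ j)) (abs_nonneg _)
      _ = (∑ j, |A i j|) * ‖v i‖ := (Finset.sum_mul _ _ _).symm
      _ ≤ C * ‖v i‖ := mul_le_mul_of_nonneg_right (h i) (norm_nonneg _)
  exact le_of_mul_le_mul_right hrow hvi

open Finset in
lemma argmax_bound {n : Type*} [Fintype n] [DecidableEq n] (P : Matrix n n ℝ) (b : ℝ)
    (hdom : ∀ i, b + ∑ j ∈ Finset.univ.erase i, |P i j| ≤ |P i i|)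
    (x : n → ℝ) (i : n) (hi : ∀ j, |x j| ≤ |x i|) :
    b * |x i| ≤ |(P.mulVec x) i| := by
  set S := ∑ j ∈ Finset.univ.erase i, |P i j| with hS
  have hsplit : (P.mulVec x) i = P i i * x i + ∑ j ∈ Finset.univ.erase i, P i j * x j := by
    rw [Matrix.mulVec, dotProduct]
    exact (Finset.add_sum_erase _ _ (Finset.mem_univ i)).symm
  have hsum : |∑ j ∈ Finset.univ.erase i, P i j * x j| ≤ S * |x i| := by
    calc |∑ j ∈ Finset.univ.erase i, P i j * x j|
        ≤ ∑ j ∈ Finset.univ.erase i, |P i j * x j| := Finset.abs_sum_le_sum_abs _ _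
      _ ≤ ∑ j ∈ Finset.univ.erase i, |P i j| * |x i| := by
          apply Finset.sum_le_sum; intro j _
          rw [abs_mul]
          exact mul_le_mul_of_nonneg_left (hi j) (abs_nonneg _)
      _ = S * |x i| := (Finset.sum_mul _ _ _).symm
  have h1 : |P i i| * |x i| ≤ |(P.mulVec x) i| + S * |x i| := by
    have heq : P i i * x i = (P.mulVec x) i - ∑ j ∈ Finset.univ.erase i, P i j * x j := by
      rw [hsplit]; ring
    calc |P i i| * |x i| = |P i i * x i| := (abs_mul _ _).symm
      _ ≤ |(P.mulVec x) i| + |∑ j ∈ Finset.univ.erase i, P i j * x j| := by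
          rw [heq]; exact abs_sub _ _
      _ ≤ |(P.mulVec x) i| + S * |x i| := by linarith
  have h2 : (b + S) * |x i| ≤ |P i i| * |x i| :=
    mul_le_mul_of_nonneg_right (hdom i) (abs_nonneg _)
  nlinarith [abs_nonneg (x i)]

open Finset in
lemma dom_invertible {n : Type*} [Fintype n] [DecidableEq n] [Nonempty n]
    (P : Matrix n n ℝ) (b : ℝ) (hb : 0 < b)
    (hdom : ∀ i, b + ∑ j ∈ Finset.univ.erase i, |P i j| ≤ |P i i|) :
    IsUnit P.det := by
  rw [isUnit_iff_ne_zero]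
  intro hdet
  obtain ⟨v, hv0, hPv⟩ := Matrix.exists_mulVec_eq_zero_iff.mpr hdet
  obtain ⟨i, -, hi⟩ := Finset.exists_max_image Finset.univ (fun j => |v j|) univ_nonempty
  have := argmax_bound P b hdom v i (fun j => hi j (mem_univ j))
  rw [hPv] at this
  simp only [Pi.zero_apply, abs_zero] at this
  have hvi : |v i| ≤ 0 := by nlinarith
  apply hv0
  funext j
  have := (hi j (mem_univ j)).trans hvi
  simpa [abs_nonpos_iff] using this

open Finset in
/-- Varah's bound: absolute row sums of the inverse of a strictly diagonally
dominant matrix with gap `b` are bounded by `1 / b`. -/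
lemma inv_row_sum_le {n : Type*} [Fintype n] [DecidableEq n] [Nonempty n]
    (P : Matrix n n ℝ) (b : ℝ) (hb : 0 < b)
    (hdom : ∀ i, b + ∑ j ∈ Finset.univ.erase i, |P i j| ≤ |P i i|) (i : n) :
    ∑ j, |P⁻¹ i j| ≤ 1 / b := by
  have hu := dom_invertible P b hb hdom
  have hPQ : P * P⁻¹ = 1 := Matrix.mul_nonsing_inv P hu
  set s : n → ℝ := fun j => if 0 ≤ P⁻¹ i j then 1 else -1 with hs
  set x := P⁻¹.mulVec s with hx
  have hxi : x i = ∑ j, |P⁻¹ i j| := by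
    rw [hx, Matrix.mulVec, dotProduct]
    apply Finset.sum_congr rfl
    intro j _
    rw [hs]
    by_cases h : 0 ≤ P⁻¹ i j
    · simp [h, abs_of_nonneg h]
    · simp [h, abs_of_neg (lt_of_not_ge h)]
  have hPx : P.mulVec x = s := by
    rw [hx, Matrix.mulVec_mulVec, hPQ, Matrix.one_mulVec]
  obtain ⟨i₀, -, hi₀⟩ := Finset.exists_max_image Finset.univ (fun j => |x j|) univ_nonempty
  have h1 : b * |x i₀| ≤ |s i₀| := by
    have := argmax_bound P b hdom x i₀ (fun j => hi₀ j (mem_univ j))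
    rwa [hPx] at this
  have hsabs : |s i₀| = 1 := by
    rw [hs]; by_cases h : 0 ≤ P⁻¹ i i₀ <;> simp [h]
  rw [hsabs] at h1
  calc ∑ j, |P⁻¹ i j| = x i := hxi.symm
    _ ≤ |x i| := le_abs_self _
    _ ≤ |x i₀| := hi₀ i (mem_univ i)
    _ ≤ 1 / b := by rw [le_div_iff₀ hb]; linarith

lemma neuLap_diag (m : ℕ) (Δ : ℝ) (i : Fin m) : neuLap m Δ i i = -2 / Δ ^ 2 := by
  simp [neuLap]

open Finset in
lemma neuLap_offsum {m : ℕ} (hm : 2 ≤ m) {Δ : ℝ} (hΔ : 0 < Δ) (i : Fin m) :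
    ∑ j ∈ Finset.univ.erase i, |neuLap m Δ i j| ≤ 2 / Δ ^ 2 := by
  have hΔ2 : (0:ℝ) < Δ ^ 2 := by positivity
  have hpos1 : (0:ℝ) ≤ 1 / Δ ^ 2 := by positivity
  have hpos2 : (0:ℝ) ≤ 2 / Δ ^ 2 := by positivity
  rcases eq_or_ne (i : ℕ) 0 with hi0 | hi0
  · -- row 0 : only entry at j = 1, value 2/Δ²
    calc ∑ j ∈ Finset.univ.erase i, |neuLap m Δ i j|
        ≤ ∑ j ∈ Finset.univ.erase i, (if (j : ℕ) = 1 then 2 / Δ ^ 2 else 0) := by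
          apply Finset.sum_le_sum
          intro j hj
          have hji : j ≠ i := Finset.ne_of_mem_erase hj
          have hij : i ≠ j := hji.symm
          have hjlt := j.isLt
          have hine : (i : ℕ) ≠ (j : ℕ) := fun h => hij (Fin.ext h)
          simp only [neuLap, Matrix.of_apply]
          rw [if_neg hij]
          by_cases hj1 : (j : ℕ) = 1
          · rw [if_pos (Or.inl ⟨hi0, hj1⟩), if_pos hj1, abs_of_nonneg hpos2]
          · rw [if_neg, if_neg hj1, if_neg]
            · simp
            · omega
            · omega
      _ ≤ ∑ j : Fin m, (if (j : ℕ) = 1 then 2 / Δ ^ 2 else 0) := by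
          apply Finset.sum_le_sum_of_subset_of_nonneg (Finset.erase_subset _ _)
          intro j _ _; split <;> simp [hpos2]
      _ = 2 / Δ ^ 2 := by
          rw [Finset.sum_eq_single (⟨1, by omega⟩ : Fin m)]
          · simp
          · intro j _ hj
            have : (j : ℕ) ≠ 1 := fun h => hj (Fin.ext h)
            simp [this]
          · simp
  · rcases eq_or_ne (i : ℕ) (m - 1) with him | him
    · -- last row : only entry at j = m-2, value 2/Δ²
      calc ∑ j ∈ Finset.univ.erase i, |neuLap m Δ i j|
          ≤ ∑ j ∈ Finset.univ.erase i, (if (j : ℕ) = m - 2 then 2 / Δ ^ 2 else 0) := by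
            apply Finset.sum_le_sum
            intro j hj
            have hji : j ≠ i := Finset.ne_of_mem_erase hj
            have hij : i ≠ j := hji.symm
            have hjlt := j.isLt
            have hilt := i.isLt
            have hine : (i : ℕ) ≠ (j : ℕ) := fun h => hij (Fin.ext h)
            simp only [neuLap, Matrix.of_apply]
            rw [if_neg hij]
            by_cases hj1 : (j : ℕ) = m - 2
            · rw [if_pos (Or.inr ⟨him, hj1⟩), if_pos hj1, abs_of_nonneg hpos2]
            · rw [if_neg, if_neg hj1, if_neg]
              · simp
              · omega
              · omega
        _ ≤ ∑ j : Fin m, (if (j : ℕ) = m - 2 then 2 / Δ ^ 2 else 0) := by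
            apply Finset.sum_le_sum_of_subset_of_nonneg (Finset.erase_subset _ _)
            intro j _ _; split <;> simp [hpos2]
        _ = 2 / Δ ^ 2 := by
            rw [Finset.sum_eq_single (⟨m - 2, by omega⟩ : Fin m)]
            · simp
            · intro j _ hj
              have : (j : ℕ) ≠ m - 2 := fun h => hj (Fin.ext h)
              simp [this]
            · simp
    · -- interior row
      have hilt := i.isLt
      calc ∑ j ∈ Finset.univ.erase i, |neuLap m Δ i j|
          ≤ ∑ j ∈ Finset.univ.erase i,
              ((if (j : ℕ) = (i : ℕ) + 1 then 1 / Δ ^ 2 else 0) +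
               (if (j : ℕ) + 1 = (i : ℕ) then 1 / Δ ^ 2 else 0)) := by
            apply Finset.sum_le_sum
            intro j hj
            have hji : j ≠ i := Finset.ne_of_mem_erase hj
            have hij : i ≠ j := hji.symm
            have hjlt := j.isLt
            have hine : (i : ℕ) ≠ (j : ℕ) := fun h => hij (Fin.ext h)
            simp only [neuLap, Matrix.of_apply]
            rw [if_neg hij, if_neg (by omega)]
            by_cases h1 : (i : ℕ) + 1 = (j : ℕ)
            · rw [if_pos (Or.inl h1), if_pos (by omega), if_neg (by omega),
                abs_of_nonneg hpos1, add_zero]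
            · by_cases h2 : (j : ℕ) + 1 = (i : ℕ)
              · rw [if_pos (Or.inr h2), if_neg (by omega), if_pos h2,
                  abs_of_nonneg hpos1, zero_add]
              · rw [if_neg (by omega), if_neg (by omega), if_neg (by omega)]
                simp
        _ ≤ ∑ j : Fin m,
              ((if (j : ℕ) = (i : ℕ) + 1 then 1 / Δ ^ 2 else 0) +
               (if (j : ℕ) + 1 = (i : ℕ) then 1 / Δ ^ 2 else 0)) := by
            apply Finset.sum_le_sum_of_subset_of_nonneg (Finset.erase_subset _ _)
            intro j _ _
            have h1 : (0:ℝ) ≤ (if (j : ℕ) = (i : ℕ) + 1 then 1 / Δ ^ 2 else 0) := by positivity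
            have h2 : (0:ℝ) ≤ (if (j : ℕ) + 1 = (i : ℕ) then 1 / Δ ^ 2 else 0) := by positivity
            linarith
        _ = 2 / Δ ^ 2 := by
            rw [Finset.sum_add_distrib]
            have e1 : ∑ j : Fin m, (if (j : ℕ) = (i : ℕ) + 1 then 1 / Δ ^ 2 else 0)
                = 1 / Δ ^ 2 := by
              rw [Finset.sum_eq_single (⟨(i : ℕ) + 1, by omega⟩ : Fin m)]
              · simp
              · intro j _ hj
                have : (j : ℕ) ≠ (i : ℕ) + 1 := fun h => hj (Fin.ext h)
                simp [this]
              · simp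
            have e2 : ∑ j : Fin m, (if (j : ℕ) + 1 = (i : ℕ) then 1 / Δ ^ 2 else 0)
                = 1 / Δ ^ 2 := by
              rw [Finset.sum_eq_single (⟨(i : ℕ) - 1, by omega⟩ : Fin m)]
              · simp; omega
              · intro j _ hj
                have hne : (j : ℕ) + 1 ≠ (i : ℕ) := by
                  intro h
                  exact hj (Fin.ext (by simp only [Fin.val_mk]; omega))
                simp [hne]
              · simp
            rw [e1, e2]; ring

lemma kronLapN_diag (mx my : ℕ) (Δx Δy : ℝ) (p : Fin my × Fin mx) :
    kronLapN mx my Δx Δy p p = -(2 / Δx ^ 2) - 2 / Δy ^ 2 := by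
  obtain ⟨iy, ix⟩ := p
  simp [kronLapN, Matrix.kroneckerMap_apply, Matrix.one_apply, neuLap_diag]
  ring

open Finset in
lemma kronLapN_offsum {mx my : ℕ} (hmx : 2 ≤ mx) (hmy : 2 ≤ my)
    {Δx Δy : ℝ} (hΔx : 0 < Δx) (hΔy : 0 < Δy) (p : Fin my × Fin mx) :
    ∑ q ∈ Finset.univ.erase p, |kronLapN mx my Δx Δy p q| ≤ 2 / Δx ^ 2 + 2 / Δy ^ 2 := by
  obtain ⟨iy, ix⟩ := p
  have key : ∀ q : Fin my × Fin mx,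
      |kronLapN mx my Δx Δy (iy, ix) q| ≤
        (if iy = q.1 then |neuLap mx Δx ix q.2| else 0) +
        (if ix = q.2 then |neuLap my Δy iy q.1| else 0) := by
    rintro ⟨jy, jx⟩
    have : kronLapN mx my Δx Δy (iy, ix) (jy, jx) =
        (1 : Matrix (Fin my) (Fin my) ℝ) iy jy * neuLap mx Δx ix jx +
        neuLap my Δy iy jy * (1 : Matrix (Fin mx) (Fin mx) ℝ) ix jx := rfl
    rw [this]
    refine (abs_add_le _ _).trans ?_
    gcongr <;> rw [Matrix.one_apply] <;> split_ifs <;>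
      simp [abs_mul, abs_of_nonneg, le_refl]
  calc ∑ q ∈ Finset.univ.erase (iy, ix), |kronLapN mx my Δx Δy (iy, ix) q|
      ≤ ∑ q ∈ Finset.univ.erase (iy, ix),
        ((if iy = q.1 then |neuLap mx Δx ix q.2| else 0) +
         (if ix = q.2 then |neuLap my Δy iy q.1| else 0)) :=
        Finset.sum_le_sum fun q _ => key q
    _ = (∑ q : Fin my × Fin mx,
        ((if iy = q.1 then |neuLap mx Δx ix q.2| else 0) +
         (if ix = q.2 then |neuLap my Δy iy q.1| else 0))) -
        (|neuLap mx Δx ix ix| + |neuLap my Δy iy iy|) := by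
        rw [Finset.sum_erase_eq_sub (Finset.mem_univ _)]
        simp
    _ ≤ (2 / Δx ^ 2 + 2 / Δy ^ 2 + (|neuLap mx Δx ix ix| + |neuLap my Δy iy iy|)) -
        (|neuLap mx Δx ix ix| + |neuLap my Δy iy iy|) := by
        have hx : ∑ q : Fin my × Fin mx, (if iy = q.1 then |neuLap mx Δx ix q.2| else 0)
            = ∑ jx : Fin mx, |neuLap mx Δx ix jx| := by
          rw [Fintype.sum_prod_type]
          rw [Finset.sum_eq_single iy]
          · simp
          · intro jy _ hjy; simp [Ne.symm hjy]
          · simp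
        have hy : ∑ q : Fin my × Fin mx, (if ix = q.2 then |neuLap my Δy iy q.1| else 0)
            = ∑ jy : Fin my, |neuLap my Δy iy jy| := by
          rw [Fintype.sum_prod_type_right]
          rw [Finset.sum_eq_single ix]
          · simp
          · intro jx _ hjx; simp [Ne.symm hjx]
          · simp
        have hx2 : ∑ jx : Fin mx, |neuLap mx Δx ix jx|
            ≤ 2 / Δx ^ 2 + |neuLap mx Δx ix ix| := by
          have := neuLap_offsum hmx hΔx ix
          have he := Finset.sum_erase_eq_sub (s := Finset.univ)
            (f := fun jx => |neuLap mx Δx ix jx|) (Finset.mem_univ ix)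
          linarith
        have hy2 : ∑ jy : Fin my, |neuLap my Δy iy jy|
            ≤ 2 / Δy ^ 2 + |neuLap my Δy iy iy| := by
          have := neuLap_offsum hmy hΔy iy
          have he := Finset.sum_erase_eq_sub (s := Finset.univ)
            (f := fun jy => |neuLap my Δy iy jy|) (Finset.mem_univ iy)
          linarith
        rw [Finset.sum_add_distrib, hx, hy]
        linarith
    _ = 2 / Δx ^ 2 + 2 / Δy ^ 2 := by ring

open Finset in
theorem stmt13 (mx my : ℕ) (hmx : 2 ≤ mx) (hmy : 2 ≤ my)
    (Δx Δy : ℝ) (hΔx : 0 < Δx) (hΔy : 0 < Δy)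
    (α β : ℝ) (hα : 0 < α) (hβ : 0 < β)
    (hαβ : (α / β) * (1 / Δx ^ 2 + 1 / Δy ^ 2) < 1)
    (MN PN N : Matrix (Fin my × Fin mx) (Fin my × Fin mx) ℝ)
    (hMN : MN = kronLapN mx my Δx Δy)
    (hPN : PN = β • 1 - α • MN)
    (hN1 : norm1 N ≤ 4 * (1 / Δx ^ 2 + 1 / Δy ^ 2))
    (hNinf : normInf N ≤ 4 * (1 / Δx ^ 2 + 1 / Δy ^ 2)) :
    specRad ((-α) • (PN⁻¹ * N)) ≤
      4 * α * (1 / Δx ^ 2 + 1 / Δy ^ 2) / (β - α * (1 / Δx ^ 2 + 1 / Δy ^ 2)) := by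
  classical
  haveI : Nonempty (Fin mx) := ⟨⟨0, by omega⟩⟩
  haveI : Nonempty (Fin my) := ⟨⟨0, by omega⟩⟩
  set c : ℝ := 1 / Δx ^ 2 + 1 / Δy ^ 2 with hc
  have hcpos : 0 < c := by positivity
  have hacb : α * c < β := by
    rw [div_mul_eq_mul_div, div_lt_one hβ] at hαβ
    linarith
  have hgap : 0 < β - α * c := by linarith
  -- strict diagonal dominance of PN with gap β
  have hdom : ∀ p, β + ∑ q ∈ Finset.univ.erase p, |PN p q| ≤ |PN p p| := by
    intro p
    have hdiag : PN p p = β + α * (2 / Δx ^ 2 + 2 / Δy ^ 2) := by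
      rw [hPN, hMN]
      simp only [Matrix.sub_apply, Matrix.smul_apply, Matrix.one_apply_eq, smul_eq_mul,
        kronLapN_diag]
      ring
    have hoff : ∑ q ∈ Finset.univ.erase p, |PN p q| ≤ α * (2 / Δx ^ 2 + 2 / Δy ^ 2) := by
      have h1 : ∀ q ∈ Finset.univ.erase p, |PN p q| = α * |kronLapN mx my Δx Δy p q| := by
        intro q hq
        have hqp : q ≠ p := Finset.ne_of_mem_erase hq
        rw [hPN, hMN]
        simp only [Matrix.sub_apply, Matrix.smul_apply, smul_eq_mul,
          Matrix.one_apply_ne (Ne.symm hqp)]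
        rw [mul_zero, zero_sub, abs_neg, abs_mul, abs_of_pos hα]
      rw [Finset.sum_congr rfl h1, ← Finset.mul_sum]
      exact mul_le_mul_of_nonneg_left (kronLapN_offsum hmx hmy hΔx hΔy p) hα.le
    have habs : |PN p p| = β + α * (2 / Δx ^ 2 + 2 / Δy ^ 2) := by
      rw [hdiag, abs_of_pos]
      positivity
    rw [habs]
    linarith
  have hinv : ∀ i, ∑ j, |PN⁻¹ i j| ≤ 1 / β := fun i => inv_row_sum_le PN β hβ hdom i
  have hNrow : ∀ k, ∑ j, |N k j| ≤ 4 * c := by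
    intro k
    refine le_trans ?_ hNinf
    exact le_ciSup (f := fun k => ∑ j, |N k j|) (Set.Finite.bddAbove (Set.finite_range _)) k
  apply specRad_le_of_rows
  · apply div_nonneg _ hgap.le
    positivity
  · intro i
    have hrow : ∑ j, |((-α) • (PN⁻¹ * N)) i j| ≤ α * (1 / β * (4 * c)) := by
      calc ∑ j, |((-α) • (PN⁻¹ * N)) i j| = ∑ j, α * |(PN⁻¹ * N) i j| := by
            apply Finset.sum_congr rfl; intro j _
            rw [Matrix.smul_apply, smul_eq_mul, abs_mul, abs_neg, abs_of_pos hα]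
        _ = α * ∑ j, |(PN⁻¹ * N) i j| := (Finset.mul_sum _ _ _).symm
        _ ≤ α * (1 / β * (4 * c)) := by
            apply mul_le_mul_of_nonneg_left _ hα.le
            calc ∑ j, |(PN⁻¹ * N) i j| ≤ ∑ j, ∑ k, |PN⁻¹ i k| * |N k j| := by
                  apply Finset.sum_le_sum; intro j _
                  rw [Matrix.mul_apply]
                  refine (Finset.abs_sum_le_sum_abs _ _).trans ?_
                  apply Finset.sum_le_sum; intro k _; rw [abs_mul]
              _ = ∑ k, |PN⁻¹ i k| * ∑ j, |N k j| := by
                  rw [Finset.sum_comm]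
                  apply Finset.sum_congr rfl; intro k _
                  rw [← Finset.mul_sum]
              _ ≤ ∑ k, |PN⁻¹ i k| * (4 * c) := by
                  apply Finset.sum_le_sum; intro k _
                  exact mul_le_mul_of_nonneg_left (hNrow k) (abs_nonneg _)
              _ = (∑ k, |PN⁻¹ i k|) * (4 * c) := (Finset.sum_mul _ _ _).symm
              _ ≤ 1 / β * (4 * c) := mul_le_mul_of_nonneg_right (hinv i) (by positivity)
    refine hrow.trans ?_
    have heq : α * (1 / β * (4 * c)) = 4 * α * c / β := by
      field_simp
    rw [heq, div_le_div_iff₀ hβ hgap]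
    nlinarith [sq_nonneg (α * c)]
end
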